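/- arXiv:2102.08786 — 7 statements merged into one kernel-verified Lean document; each statement's English description precedes it below -/
import Mathlib

section
/- Let G be a simple graph and let w_0, w_1, …, w_ℓ be a non-backtracking walk in G. If 0 ≤ i < j ≤ ℓ and (j − i : ℕ∞) < girth(G), then w_i ≠ w_j. -/
open SimpleGraph
lemma seg_walk {V : Type*} {G : SimpleGraph V} {u v : V} (W : G.Walk u v) :
    ∀ (n a : ℕ), a + n ≤ W.length →
    ∃ P : G.Walk (W.getVert a) (W.getVert (a + n)),
      P.length = n ∧
      P.support = W.getVert a :: (List.range n).map (fun k => W.getVert (a + k + 1)) ∧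
      P.edges = (List.range n).map (fun k => s(W.getVert (a + k), W.getVert (a + k + 1))) := by
  intro n
  induction n with
  | zero => intro a ha; exact ⟨Walk.nil, by simp, by simp, by simp⟩
  | succ n ih =>
    intro a ha
    obtain ⟨P, hl, hs, he⟩ := ih (a + 1) (by omega)
    have hadj : G.Adj (W.getVert a) (W.getVert (a + 1)) := W.adj_getVert_succ (by omega)
    refine ⟨(Walk.cons hadj P).copy rfl (by congr 1; omega), ?_, ?_, ?_⟩
    · simp [hl]
    · rw [Walk.support_copy, Walk.support_cons, hs, List.range_succ_eq_map]
      simp only [List.map_cons, List.map_map]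
      refine congrArg _ (congrArg₂ _ (by norm_num) ?_)
      refine List.map_congr_left fun k _ => ?_
      simp only [Function.comp_apply]
      congr 1
      omega
    · rw [Walk.edges_copy, Walk.edges_cons, he, List.range_succ_eq_map]
      simp only [List.map_cons, List.map_map]
      refine congrArg₂ List.cons (by norm_num) ?_
      refine List.map_congr_left fun k _ => ?_
      simp only [Function.comp_apply]
      have h1 : a + 1 + k = a + (k + 1) := by omega
      rw [h1]

lemma aux_nbt {V : Type*} (G : SimpleGraph V) {u v : V} (W : G.Walk u v)
    (hnb : ∀ i : ℕ, 1 ≤ i → i + 1 ≤ W.length → W.getVert (i + 1) ≠ W.getVert (i - 1)) :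
    ∀ d i j, i < j → j ≤ W.length → j - i = d → ((d : ℕ) : ℕ∞) < G.egirth →
      W.getVert i ≠ W.getVert j := by
  intro d
  induction d using Nat.strong_induction_on with
  | _ d IH =>
  intro i j hij hj hd hg heq
  -- small cases
  have hd1 : d ≠ 1 := by
    intro h1
    have hj' : j = i + 1 := by omega
    have := W.adj_getVert_succ (show i < W.length by omega)
    rw [hj'] at heq
    exact G.ne_of_adj this heq
  have hd2 : d ≠ 2 := by
    intro h2
    have hj' : j = i + 2 := by omega
    refine hnb (i + 1) (by omega) (by omega) ?_
    have : i + 1 - 1 = i := by omega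
    rw [this, show i + 1 + 1 = i + 2 from rfl, ← hj']
    exact heq.symm
  have hd3 : 3 ≤ d := by
    rcases Nat.lt_or_ge d 3 with h | h
    · interval_cases d <;> omega
    · exact h
  by_cases hmin : ∃ a b, i ≤ a ∧ a < b ∧ b ≤ j ∧ b - a < d ∧ W.getVert a = W.getVert b
  · obtain ⟨a, b, ha, hab, hb, hlt, he⟩ := hmin
    refine IH (b - a) hlt a b hab (hb.trans hj) rfl ?_ he
    exact lt_of_le_of_lt (by exact_mod_cast Nat.cast_le.mpr hlt.le) hg
  · push_neg at hmin
    -- key injectivity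
    have hKey : ∀ p q, p ≤ d → q ≤ d → W.getVert (i + p) = W.getVert (i + q) →
        p = q ∨ (p = 0 ∧ q = d) ∨ (p = d ∧ q = 0) := by
      intro p q hp hq hpq
      have hji : i + d = j := by omega
      rcases Nat.lt_trichotomy p q with h | h | h
      · -- p < q
        by_cases hqd : q = d
        · subst hqd
          rw [hji] at hpq
          rcases Nat.eq_zero_or_pos p with h0 | h0
          · exact Or.inr (Or.inl ⟨h0, rfl⟩)
          · exfalso
            exact hmin i (i + p) le_rfl (by omega) (by omega) (by omega)
              (heq.trans hpq.symm)
        · exfalso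
          exact hmin (i + p) (i + q) (by omega) (by omega) (by omega) (by omega) hpq
      · exact Or.inl h
      · -- q < p
        by_cases hpd : p = d
        · subst hpd
          rw [hji] at hpq
          rcases Nat.eq_zero_or_pos q with h0 | h0
          · exact Or.inr (Or.inr ⟨rfl, h0⟩)
          · exfalso
            exact hmin i (i + q) le_rfl (by omega) (by omega) (by omega)
              (heq.trans hpq)
        · exfalso
          exact hmin (i + q) (i + p) (by omega) (by omega) (by omega) (by omega) hpq.symm
    -- build the closed walk
    obtain ⟨P, hl, hs, he⟩ := seg_walk W d i (by omega)
    have hji : i + d = j := by omega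
    have hcast : W.getVert (i + d) = W.getVert i := by rw [hji, ← heq]
    set P' : G.Walk (W.getVert i) (W.getVert i) := P.copy rfl hcast with hP'
    have hcyc : P'.IsCycle := by
      refine ⟨⟨⟨?_⟩, ?_⟩, ?_⟩
      · -- edges nodup
        rw [hP', Walk.edges_copy, he]
        refine List.Nodup.map_on ?_ (List.nodup_range (n := d))
        intro k hk m hm hkm
        simp only [List.mem_range] at hk hm
        rw [Sym2.eq_iff] at hkm
        rcases hkm with ⟨h1, h2⟩ | ⟨h1, h2⟩
        · rcases hKey k m (by omega) (by omega) h1 with h | h | h <;> omega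
        · have e1 := hKey k (m + 1) (by omega) (by omega) (by rw [show i + (m + 1) = i + m + 1 from by omega]; exact h1)
          have e2 := hKey (k + 1) m (by omega) (by omega) (by
            rw [show i + (k + 1) = i + k + 1 from by omega, h2])
          rcases e1 with h | h | h <;> rcases e2 with h' | h' | h' <;> omega
      · -- ne nil
        intro hnil
        have : P'.length = 0 := by rw [hnil]; rfl
        rw [hP', Walk.length_copy, hl] at this
        omega
      · -- support tail nodup
        rw [hP', Walk.support_copy, hs]
        simp only [List.tail_cons]
        refine List.Nodup.map_on ?_ (List.nodup_range (n := d))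
        intro k hk m hm hkm
        simp only [List.mem_range] at hk hm
        have := hKey (k + 1) (m + 1) (by omega) (by omega) (by
          rw [show i + (k + 1) = i + k + 1 from by omega,
              show i + (m + 1) = i + m + 1 from by omega]
          exact hkm)
        omega
    have hle : G.egirth ≤ P'.length := le_egirth.mp le_rfl _ P' hcyc
    rw [hP', Walk.length_copy, hl] at hle
    exact absurd (lt_of_lt_of_le hg hle) (lt_irrefl _)

/-- On a non-backtracking walk, two positions at distance less
than the girth carry distinct vertices. -/
theorem nonbacktracking_walk_getVert_ne {V : Type*} (G : SimpleGraph V) {u v : V}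
    (W : G.Walk u v)
    (hnb : ∀ i : ℕ, 1 ≤ i → i + 1 ≤ W.length → W.getVert (i + 1) ≠ W.getVert (i - 1))
    (i j : ℕ) (hij : i < j) (hj : j ≤ W.length) (hgirth : ((j - i : ℕ) : ℕ∞) < G.egirth) :
    W.getVert i ≠ W.getVert j :=
  aux_nbt G W hnb (j - i) i j hij hj rfl hgirth
end

section
/- Let G be a simple graph and let w_0, w_1, …, w_ℓ be a non-backtracking walk in G. If 0 ≤ i and i + 2 ≤ j ≤ ℓ and (j − i + 1 : ℕ∞) < girth(G), then w_i and w_j are not adjacent in G. -/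
open SimpleGraph Walk

/-- The segment of a walk from position `i` to position `i + d`. -/
def segWalk {V : Type*} {G : SimpleGraph V} {u v : V} (W : G.Walk u v) (i : ℕ) :
    (d : ℕ) → (h : i + d ≤ W.length) → G.Walk (W.getVert i) (W.getVert (i + d))
  | 0, _ => (Walk.nil.copy rfl rfl : G.Walk (W.getVert i) (W.getVert i))
  | d + 1, h => (segWalk W i d (by omega)).concat (W.adj_getVert_succ (by omega))

lemma segWalk_support {V : Type*} {G : SimpleGraph V} {u v : V} (W : G.Walk u v) (i : ℕ) :
    ∀ (d : ℕ) (h : i + d ≤ W.length),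
      (segWalk W i d h).support = (List.range (d + 1)).map (fun k => W.getVert (i + k))
  | 0, h => by simp [segWalk, List.range_succ]
  | d + 1, h => by
    rw [segWalk, Walk.support_concat, segWalk_support W i d (by omega), List.range_succ (n := d + 1)]
    simp only [List.map_append, List.map_cons, List.map_nil, List.concat_eq_append]

lemma segWalk_edges {V : Type*} {G : SimpleGraph V} {u v : V} (W : G.Walk u v) (i : ℕ) :
    ∀ (d : ℕ) (h : i + d ≤ W.length),
      (segWalk W i d h).edges =
        (List.range d).map (fun k => s(W.getVert (i + k), W.getVert (i + k + 1)))
  | 0, h => by simp [segWalk]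
  | d + 1, h => by
    rw [segWalk, Walk.edges_concat, segWalk_edges W i d (by omega), List.range_succ (n := d)]
    simp
    exact Or.inl rfl

lemma segWalk_length {V : Type*} {G : SimpleGraph V} {u v : V} (W : G.Walk u v) (i : ℕ) :
    ∀ (d : ℕ) (h : i + d ≤ W.length), (segWalk W i d h).length = d
  | 0, h => by simp [segWalk]
  | d + 1, h => by
    rw [segWalk, Walk.length_concat, segWalk_length W i d (by omega)]

/-- On a non-backtracking walk, positions closer than the girth carry distinct vertices. -/
lemma getVert_ne_of_lt_egirth {V : Type*} {G : SimpleGraph V} {u v : V}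
    (W : G.Walk u v)
    (hnb : ∀ i : ℕ, 1 ≤ i → i + 1 ≤ W.length → W.getVert (i + 1) ≠ W.getVert (i - 1)) :
    ∀ (n a b : ℕ), a < b → b ≤ W.length → b - a ≤ n →
      ((b - a : ℕ) : ℕ∞) < G.egirth → W.getVert a ≠ W.getVert b := by
  intro n
  induction n with
  | zero => intro a b hab _ hle _; omega
  | succ n ih =>
    intro a b hab hbl hban hgirth heq
    by_cases h1 : b = a + 1
    · subst h1
      exact G.ne_of_adj (W.adj_getVert_succ (by omega)) heq
    by_cases h2 : b = a + 2
    · subst h2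
      exact hnb (a + 1) (by omega) (by omega) (by simpa using heq.symm)
    -- now b ≥ a + 3 : build a cycle of length b - a
    have hb3 : a + 3 ≤ b := by omega
    set d := b - 1 - a with hd
    have hcd : a + d = b - 1 := by omega
    have hseg : a + d ≤ W.length := by omega
    -- distinctness within the segment
    have hdist : ∀ k l, k ≤ d → l ≤ d → k < l → W.getVert (a + k) ≠ W.getVert (a + l) := by
      intro k l hk hl hkl
      apply ih (a + k) (a + l) (by omega) (by omega) (by omega)
      refine lt_of_le_of_lt ?_ hgirth
      exact_mod_cast Nat.cast_le.mpr (by omega : (a + l) - (a + k) ≤ b - a)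
    let P := segWalk W a d hseg
    have hPpath : P.IsPath := by
      rw [Walk.isPath_def, segWalk_support]
      refine List.Nodup.map_on ?_ List.nodup_range
      intro k hk l hl hfkl
      by_contra hne
      rcases Nat.lt_or_ge k l with h | h
      · exact hdist k l (by simpa using Nat.lt_succ_iff.mp (List.mem_range.mp hk))
          (by simpa using Nat.lt_succ_iff.mp (List.mem_range.mp hl)) h hfkl
      · exact hdist l k (by simpa using Nat.lt_succ_iff.mp (List.mem_range.mp hl))
          (by simpa using Nat.lt_succ_iff.mp (List.mem_range.mp hk)) (by omega) hfkl.symm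
    have hadj : G.Adj (W.getVert a) (W.getVert (a + d)) := by
      have h := W.adj_getVert_succ (i := b - 1) (by omega)
      rw [(by omega : b - 1 + 1 = b), ← heq, ← hcd] at h
      exact h.symm
    have hedge : s(W.getVert a, W.getVert (a + d)) ∉ P.edges := by
      rw [segWalk_edges]
      simp only [List.mem_map, List.mem_range, not_exists, not_and]
      intro k hk hEq
      rw [Sym2.eq_iff] at hEq
      rcases hEq with ⟨hA, hB⟩ | ⟨hA, hB⟩
      · rcases Nat.eq_zero_or_pos k with rfl | hkpos
        · exact hdist 1 d (by omega) le_rfl (by omega) (by simpa using hB)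
        · exact hdist 0 k (by omega) (by omega) hkpos (by simpa using hA.symm)
      · exact hdist k d (by omega) le_rfl (by omega) (by simpa using hA)
    have hcyc : ((Walk.cons hadj P.reverse)).IsCycle := by
      rw [Walk.cons_isCycle_iff]
      refine ⟨hPpath.reverse, ?_⟩
      rw [Walk.edges_reverse, List.mem_reverse]
      exact hedge
    have hle : G.egirth ≤ ((Walk.cons hadj P.reverse).length : ℕ∞) :=
      (SimpleGraph.le_egirth.mp le_rfl) _ _ hcyc
    have hlen : (Walk.cons hadj P.reverse).length = b - a := by
      rw [Walk.length_cons, Walk.length_reverse, segWalk_length]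
      omega
    rw [hlen] at hle
    exact absurd (lt_of_lt_of_le hgirth hle) (lt_irrefl _)

/-- On a non-backtracking walk, two positions `i` and `j` with
`i + 2 ≤ j` and `j - i + 1` less than the girth carry non-adjacent vertices. -/
theorem nonbacktracking_walk_not_adj {V : Type*} (G : SimpleGraph V) {u v : V}
    (W : G.Walk u v)
    (hnb : ∀ i : ℕ, 1 ≤ i → i + 1 ≤ W.length → W.getVert (i + 1) ≠ W.getVert (i - 1))
    (i j : ℕ) (hij : i + 2 ≤ j) (hj : j ≤ W.length)
    (hgirth : ((j - i + 1 : ℕ) : ℕ∞) < G.egirth) :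
    ¬ G.Adj (W.getVert i) (W.getVert j) := by
  intro hadj
  set d := j - i with hd
  have hcd : i + d = j := by omega
  have hseg : i + d ≤ W.length := by omega
  have hdist : ∀ k l, k ≤ d → l ≤ d → k < l → W.getVert (i + k) ≠ W.getVert (i + l) := by
    intro k l hk hl hkl
    apply getVert_ne_of_lt_egirth W hnb (j + 1) (i + k) (i + l) (by omega) (by omega) (by omega)
    refine lt_of_le_of_lt ?_ hgirth
    exact_mod_cast Nat.cast_le.mpr (by omega : (i + l) - (i + k) ≤ j - i + 1)
  let P := segWalk W i d hseg
  have hPpath : P.IsPath := by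
    rw [Walk.isPath_def, segWalk_support]
    refine List.Nodup.map_on ?_ List.nodup_range
    intro k hk l hl hfkl
    by_contra hne
    rcases Nat.lt_or_ge k l with h | h
    · exact hdist k l (by simpa using Nat.lt_succ_iff.mp (List.mem_range.mp hk))
        (by simpa using Nat.lt_succ_iff.mp (List.mem_range.mp hl)) h hfkl
    · exact hdist l k (by simpa using Nat.lt_succ_iff.mp (List.mem_range.mp hl))
        (by simpa using Nat.lt_succ_iff.mp (List.mem_range.mp hk)) (by omega) hfkl.symm
  have hadj' : G.Adj (W.getVert i) (W.getVert (i + d)) := by rw [hcd]; exact hadj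
  have hedge : s(W.getVert i, W.getVert (i + d)) ∉ P.edges := by
    rw [segWalk_edges]
    simp only [List.mem_map, List.mem_range, not_exists, not_and]
    intro k hk hEq
    rw [Sym2.eq_iff] at hEq
    rcases hEq with ⟨hA, hB⟩ | ⟨hA, hB⟩
    · rcases Nat.eq_zero_or_pos k with rfl | hkpos
      · exact hdist 1 d (by omega) le_rfl (by omega) (by simpa using hB)
      · exact hdist 0 k (by omega) (by omega) hkpos (by simpa using hA.symm)
    · exact hdist k d (by omega) le_rfl (by omega) (by simpa using hA)
  have hcyc : ((Walk.cons hadj' P.reverse)).IsCycle := by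
    rw [Walk.cons_isCycle_iff]
    refine ⟨hPpath.reverse, ?_⟩
    rw [Walk.edges_reverse, List.mem_reverse]
    exact hedge
  have hle : G.egirth ≤ ((Walk.cons hadj' P.reverse).length : ℕ∞) :=
    (SimpleGraph.le_egirth.mp le_rfl) _ _ hcyc
  have hlen : (Walk.cons hadj' P.reverse).length = j - i + 1 := by
    rw [Walk.length_cons, Walk.length_reverse, segWalk_length]
  rw [hlen] at hle
  exact absurd (lt_of_lt_of_le hgirth hle) (lt_irrefl _)
end

section
/- Let G be a simple graph in which every vertex has degree at most 2, and let W be a walk of length ℓ in G with (ℓ + 1 : ℕ∞) < girth(G). Then the induced subgraphของ G on the set of vertices visited by W is isomorphic to the path graph on k vertices, where k is the number of distinct vertices visited by W. -/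
open SimpleGraph Walk

section Helpers

variable {V : Type*} {G : SimpleGraph V}

lemma getVert_eq_support_getElem' {u v : V} (p : G.Walk u v) {i : ℕ} (hi : i ≤ p.length) :
    p.support[i]'(by rw [Walk.length_support]; omega) = p.getVert i := by
  induction p generalizing i with
  | nil =>
    simp only [Walk.length_nil, Nat.le_zero] at hi
    subst hi
    simp
  | cons h p ih =>
    cases i with
    | zero => simp
    | succ n =>
      simp only [Walk.support_cons, Walk.getVert_cons_succ, List.getElem_cons_succ]
      exact ih (by simp only [Walk.length_cons] at hi; omega)

lemma SimpleGraph.Walk.IsPath.getVert_inj' {u v : V} {p : G.Walk u v} (hp : p.IsPath) {i j : ℕ}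
    (hi : i ≤ p.length) (hj : j ≤ p.length) (h : p.getVert i = p.getVert j) : i = j := by
  rw [← getVert_eq_support_getElem' p hi, ← getVert_eq_support_getElem' p hj] at h
  exact (List.Nodup.getElem_inj_iff hp.support_nodup).mp h

lemma edge_getVert_mem' {u v : V} (p : G.Walk u v) {i : ℕ} (hi : i < p.length) :
    s(p.getVert i, p.getVert (i + 1)) ∈ p.edges := by
  induction p generalizing i with
  | nil => simp at hi
  | cons h p ih =>
    cases i with
    | zero =>
      simp only [Walk.getVert_zero, Walk.getVert_cons_succ, Walk.edges_cons, List.mem_cons]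
      left
      simp
    | succ n =>
      simp only [Walk.getVert_cons_succ, Walk.edges_cons, List.mem_cons]
      right
      exact ih (by simp only [Walk.length_cons] at hi; omega)

lemma exists_getVert_of_mem_edges' {u v : V} (p : G.Walk u v) {e : Sym2 V} (he : e ∈ p.edges) :
    ∃ i, i < p.length ∧ e = s(p.getVert i, p.getVert (i + 1)) := by
  induction p with
  | nil => simp at he
  | cons h p ih =>
    rw [Walk.edges_cons, List.mem_cons] at he
    rcases he with he | he
    · refine ⟨0, by simp, ?_⟩
      simpa using he
    · obtain ⟨i, hi, rfl⟩ := ih he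
      exact ⟨i + 1, by simp only [Walk.length_cons]; omega, by simp⟩

lemma exists_walk_getVert' {u v : V} (p : G.Walk u v) {i j : ℕ} (hij : i ≤ j)
    (hj : j ≤ p.length) :
    ∃ q : G.Walk (p.getVert i) (p.getVert j),
      (∀ e ∈ q.edges, e ∈ p.edges) ∧ q.length = j - i := by
  induction j, hij using Nat.le_induction with
  | base => exact ⟨Walk.nil, by simp, by simp⟩
  | succ j hij ih =>
    obtain ⟨q, hq, hql⟩ := ih (by omega)
    refine ⟨q.concat (p.adj_getVert_succ (by omega)), ?_, ?_⟩
    · intro e he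
      rw [Walk.edges_concat, List.concat_eq_append, List.mem_append] at he
      rcases he with he | he
      · exact hq e he
      · simp only [List.mem_singleton] at he
        subst he
        exact edge_getVert_mem' p (by omega)
    · rw [Walk.length_concat]; omega

/-- In a graph of max degree ≤ 2, every walk's support is the support of some path. -/
lemma exists_isPath_support_eq' [Fintype V] [DecidableEq V] [DecidableRel G.Adj]
    (hdeg : ∀ x : V, G.degree x ≤ 2) {u v : V} (W : G.Walk u v) :
    ∃ (a b : V) (P : G.Walk a b), P.IsPath ∧ ∀ x, x ∈ P.support ↔ x ∈ W.support := by
  induction W with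
  | nil => exact ⟨_, _, Walk.nil, Walk.IsPath.nil, fun x => Iff.rfl⟩
  | @cons u x v h W ih =>
    obtain ⟨a, b, P, hP, hsupp⟩ := ih
    by_cases hu : u ∈ P.support
    · refine ⟨a, b, P, hP, fun y => ?_⟩
      rw [Walk.support_cons, List.mem_cons, hsupp y]
      constructor
      · exact Or.inr
      · rintro (rfl | hy)
        · exact (hsupp y).mp hu
        · exact hy
    · have hx : x ∈ P.support := (hsupp x).mpr W.start_mem_support
      have hxab : x = a ∨ x = b := by
        by_contra hcon
        push_neg at hcon
        obtain ⟨hxa, hxb⟩ := hcon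
        obtain ⟨i, hgi, hil⟩ := Walk.mem_support_iff_exists_getVert.mp hx
        have hi0 : i ≠ 0 := by
          intro h0; subst h0; simp at hgi; exact hxa hgi.symm
        have hiL : i ≠ P.length := by
          intro hL; subst hL; simp at hgi; exact hxb hgi.symm
        have hadj1 : G.Adj (P.getVert (i - 1)) x := by
          have := P.adj_getVert_succ (i := i - 1) (by omega)
          rwa [show i - 1 + 1 = i by omega, hgi] at this
        have hadj2 : G.Adj x (P.getVert (i + 1)) := by
          have := P.adj_getVert_succ (i := i) (by omega)
          rwa [hgi] at this
        have hn12 : P.getVert (i - 1) ≠ P.getVert (i + 1) := by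
          intro heq
          have := hP.getVert_inj' (by omega) (by omega) heq
          omega
        have hun1 : u ≠ P.getVert (i - 1) := by
          intro heq
          exact hu (heq ▸ Walk.mem_support_iff_exists_getVert.mpr ⟨i - 1, rfl, by omega⟩)
        have hun2 : u ≠ P.getVert (i + 1) := by
          intro heq
          exact hu (heq ▸ Walk.mem_support_iff_exists_getVert.mpr ⟨i + 1, rfl, by omega⟩)
        have hsub : ({u, P.getVert (i - 1), P.getVert (i + 1)} : Finset V) ⊆
            G.neighborFinset x := by
          intro y hy
          simp only [Finset.mem_insert, Finset.mem_singleton] at hy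
          rw [SimpleGraph.mem_neighborFinset]
          rcases hy with rfl | rfl | rfl
          · exact h.symm
          · exact hadj1.symm
          · exact hadj2
        have hcard : ({u, P.getVert (i - 1), P.getVert (i + 1)} : Finset V).card = 3 := by
          rw [Finset.card_insert_of_notMem (by simp [hun1, hun2]),
            Finset.card_insert_of_notMem (by simp [hn12]), Finset.card_singleton]
        have h3 : 3 ≤ G.degree x := by
          rw [← hcard]
          exact Finset.card_le_card hsub
        have := hdeg x
        omega
      rcases hxab with rfl | rfl
      · refine ⟨u, b, Walk.cons h P, (Walk.cons_isPath_iff h P).mpr ⟨hP, hu⟩, fun y => ?_⟩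
        rw [Walk.support_cons, Walk.support_cons, List.mem_cons, List.mem_cons, hsupp y]
      · refine ⟨a, u, P.concat h.symm, ?_, fun y => ?_⟩
        · rw [Walk.isPath_def, Walk.support_concat,
            List.nodup_append']
          refine ⟨hP.support_nodup, List.nodup_singleton u, ?_⟩
          intro y hy hy'
          simp only [List.mem_singleton] at hy'
          subst hy'
          exact hu hy
        · simp only [Walk.support_concat, List.concat_eq_append, List.mem_append,
            Walk.support_cons, List.mem_cons, List.mem_singleton, hsupp y]
          tauto

end Helpers

/-- In a graph of maximum degree at most 2, the subgraph induced on
the vertices visited by a walk of length `ℓ` with `ℓ + 1 < girth G` is isomorphic to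
the path graph on `k` vertices, where `k` is the number of distinct vertices visited. -/
theorem induce_support_iso_pathGraph {V : Type*} [Fintype V] [DecidableEq V]
    (G : SimpleGraph V) [DecidableRel G.Adj]
    (hdeg : ∀ x : V, G.degree x ≤ 2)
    {u v : V} (W : G.Walk u v) (hgirth : ((W.length + 1 : ℕ) : ℕ∞) < G.egirth) :
    Nonempty
      (G.induce {x | x ∈ W.support} ≃g SimpleGraph.pathGraph W.support.toFinset.card) := by
  obtain ⟨a, b, P, hP, hsupp⟩ := exists_isPath_support_eq' hdeg W
  have hfin : W.support.toFinset = P.support.toFinset := by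
    ext y; simp [hsupp y]
  have hcard : W.support.toFinset.card = P.length + 1 := by
    rw [hfin, List.toFinset_card_of_nodup hP.support_nodup, Walk.length_support]
  have hWlen : P.length + 1 ≤ W.length + 1 := by
    rw [← hcard]
    calc W.support.toFinset.card ≤ W.support.length := W.support.toFinset_card_le
      _ = W.length + 1 := W.length_support
  -- no chords: adjacency between support vertices only between consecutive ones
  have key : ∀ i j : ℕ, i < j → j ≤ P.length → G.Adj (P.getVert i) (P.getVert j) →
      j = i + 1 := by
    intro i j hij hj hadj
    by_contra hne
    have hij2 : i + 2 ≤ j := by omega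
    have hedge : s(P.getVert j, P.getVert i) ∉ P.edges := by
      intro hmem
      obtain ⟨m, hm, hme⟩ := exists_getVert_of_mem_edges' P hmem
      rcases Sym2.eq_iff.mp hme with ⟨h1, h2⟩ | ⟨h1, h2⟩
      · have e1 := hP.getVert_inj' hj (by omega) h1
        have e2 := hP.getVert_inj' (by omega) (by omega) h2
        omega
      · have e1 := hP.getVert_inj' hj (by omega) h1
        have e2 := hP.getVert_inj' (by omega) (by omega) h2
        omega
    obtain ⟨q, hq, hql⟩ := exists_walk_getVert' P (le_of_lt hij) hj
    have hrP : q.bypass.IsPath := q.bypass_isPath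
    have hcyc : (Walk.cons hadj.symm q.bypass).IsCycle := by
      rw [Walk.cons_isCycle_iff]
      exact ⟨hrP, fun hmem => hedge (hq _ (q.edges_bypass_subset hmem))⟩
    have hle : G.egirth ≤ ((Walk.cons hadj.symm q.bypass).length : ℕ∞) :=
      le_egirth.mp le_rfl _ _ hcyc
    have hlen : (Walk.cons hadj.symm q.bypass).length ≤ W.length + 1 := by
      rw [Walk.length_cons]
      have := q.length_bypass_le
      omega
    have : G.egirth ≤ ((W.length + 1 : ℕ) : ℕ∞) :=
      hle.trans (by exact_mod_cast Nat.cast_le.mpr hlen)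
    exact absurd (hgirth.trans_le this) (lt_irrefl _)
  -- build the isomorphism
  have hmemS : ∀ i : Fin (P.length + 1), P.getVert i ∈ {x | x ∈ W.support} := by
    intro i
    exact (hsupp _).mp (Walk.mem_support_iff_exists_getVert.mpr ⟨i, rfl, by omega⟩)
  let f : Fin (P.length + 1) → {x | x ∈ W.support} := fun i => ⟨P.getVert i, hmemS i⟩
  have hbij : Function.Bijective f := by
    constructor
    · intro i j hij
      have : P.getVert i = P.getVert j := congrArg Subtype.val hij
      exact Fin.ext (hP.getVert_inj' (by omega) (by omega) this)
    · rintro ⟨y, hy⟩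
      obtain ⟨n, hn, hnl⟩ := Walk.mem_support_iff_exists_getVert.mp ((hsupp y).mpr hy)
      exact ⟨⟨n, by omega⟩, Subtype.ext hn⟩
  let e : Fin (P.length + 1) ≃ {x | x ∈ W.support} := Equiv.ofBijective f hbij
  have hadj_iff : ∀ i j : Fin (P.length + 1),
      G.Adj (P.getVert i) (P.getVert j) ↔ (SimpleGraph.pathGraph (P.length + 1)).Adj i j := by
    intro i j
    rw [SimpleGraph.pathGraph_adj]
    constructor
    · intro hadj
      have hne : (i : ℕ) ≠ (j : ℕ) := by
        intro heq
        rw [show (i : ℕ) = (j : ℕ) from heq] at hadj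
        exact G.irrefl hadj
      rcases lt_or_gt_of_ne hne with hlt | hgt
      · left
        have := key i j hlt (by omega) hadj
        omega
      · right
        have := key j i hgt (by omega) hadj.symm
        omega
    · rintro (hij | hij)
      · have := P.adj_getVert_succ (i := i) (by omega)
        rwa [show (i : ℕ) + 1 = (j : ℕ) from hij] at this
      · have := P.adj_getVert_succ (i := j) (by omega)
        rw [show (j : ℕ) + 1 = (i : ℕ) from hij] at this
        exact this.symm
  rw [hcard]
  refine ⟨(RelIso.mk e ?_ : SimpleGraph.pathGraph (P.length + 1) ≃g G.induce {x | x ∈ W.support}).symm⟩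
  intro i j
  simp only [SimpleGraph.comap_adj, Function.Embedding.coe_subtype]
  exact hadj_iff i j
end

section
/- Let G be a simple graph in which every vertex has degree at most 2, and let W = (w_0, …, w_ℓ) and W' = (w'_0, …, w'_ℓ) be walks in G of the same length ℓ ≥ 1 with w_0 = w'_0 and w_1 = w'_1. If W and W' have the same backtracking pattern, i.e., for every 1 ≤ i ≤ ℓ − 1 one has w_{i+1} = w_{i−1} if and only if w'_{i+1} = w'_{i−1}, then w_i = w'_i for all 0 ≤ i ≤ ℓ. -/
/-- In a graph of max degree ≤ 2, a vertex has at most one neighbor other than a given one. -/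
lemma deg2_unique_neighbor {V : Type*} [Fintype V] (G : SimpleGraph V) [DecidableRel G.Adj]
    (hdeg : ∀ x : V, G.degree x ≤ 2) {x a b c : V}
    (ha : G.Adj x a) (hb : G.Adj x b) (hc : G.Adj x c)
    (hba : b ≠ a) (hca : c ≠ a) : b = c := by
  classical
  by_contra hbc
  have hsub : ({a, b, c} : Finset V) ⊆ G.neighborFinset x := by
    intro y hy
    simp only [Finset.mem_insert, Finset.mem_singleton] at hy
    rcases hy with rfl | rfl | rfl <;> simpa [SimpleGraph.mem_neighborFinset]
  have hcard : ({a, b, c} : Finset V).card = 3 := by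
    rw [Finset.card_insert_of_notMem, Finset.card_insert_of_notMem, Finset.card_singleton]
    · simpa using hbc
    · simp only [Finset.mem_insert, Finset.mem_singleton]
      push_neg
      exact ⟨fun h => hba h.symm, fun h => hca h.symm⟩
  have := Finset.card_le_card hsub
  rw [hcard] at this
  have := this.trans (hdeg x)
  omega

/-- In a graph of maximum degree at most 2, a walk of length `ℓ ≥ 1`
is determined by its first two vertices together with its backtracking pattern:
if two walks of the same length agree on `w_0`, `w_1` and have the same backtracking
pattern, they agree everywhere. -/
theorem walk_determined_by_backtracking_pattern {V : Type*} [Fintype V]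
    (G : SimpleGraph V) [DecidableRel G.Adj]
    (hdeg : ∀ x : V, G.degree x ≤ 2)
    {u v u' v' : V} (W : G.Walk u v) (W' : G.Walk u' v')
    (hlen : W'.length = W.length) (hlen1 : 1 ≤ W.length)
    (h0 : W.getVert 0 = W'.getVert 0) (h1 : W.getVert 1 = W'.getVert 1)
    (hpat : ∀ i : ℕ, 1 ≤ i → i + 1 ≤ W.length →
      (W.getVert (i + 1) = W.getVert (i - 1) ↔ W'.getVert (i + 1) = W'.getVert (i - 1))) :
    ∀ i : ℕ, i ≤ W.length → W.getVert i = W'.getVert i := by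
  have key : ∀ i : ℕ, i + 1 ≤ W.length →
      W.getVert i = W'.getVert i ∧ W.getVert (i + 1) = W'.getVert (i + 1) := by
    intro i
    induction i with
    | zero => intro _; exact ⟨h0, h1⟩
    | succ n ih =>
      intro hle
      have hn1 : n + 1 ≤ W.length := by omega
      obtain ⟨hA, hB⟩ := ih hn1
      refine ⟨hB, ?_⟩
      have hpatn := hpat (n + 1) (by omega) hle
      simp only [Nat.add_sub_cancel] at hpatn
      by_cases hbt : W.getVert (n + 1 + 1) = W.getVert n
      · rw [hbt, hpatn.mp hbt, hA]
      · have hbt' : ¬ W'.getVert (n + 1 + 1) = W'.getVert n := fun h => hbt (hpatn.mpr h)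
        have adj1 : G.Adj (W.getVert (n + 1)) (W.getVert n) :=
          (W.adj_getVert_succ (by omega)).symm
        have adj2 : G.Adj (W.getVert (n + 1)) (W.getVert (n + 1 + 1)) :=
          W.adj_getVert_succ (by omega)
        have adj3 : G.Adj (W.getVert (n + 1)) (W'.getVert (n + 1 + 1)) := by
          rw [hB]
          exact W'.adj_getVert_succ (by omega)
        exact deg2_unique_neighbor G hdeg adj1 adj2 adj3 hbt
          (by rw [hA]; exact hbt')
  intro i hi
  rcases Nat.lt_or_ge i W.length with h | h
  · exact (key i h).1
  · have : i = W.length := by omega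
    subst this
    have heq : W.length - 1 + 1 = W.length := by omega
    have h2 := (key (W.length - 1) (by omega)).2
    rwa [heq] at h2
end

section
/- Let G be a simple graph, let s ≥ 2 be a window size with (s + 1 : ℕ∞) < girth(G), and let W = (w_0, …, w_ℓ) be a non-backtracking walk in G. Then all equality indicators of the window-s structural feature of W are 0 (i.e., w_i ≠ w_{i−j} whenever 1 ≤ j ≤ s and i − j ≥ 0), and all adjacency indicators with gap at least 2 are 0 (i.e., w_i is not adjacent to w_{i−j} whenever 2 ≤ j ≤ s and i − j ≥ 0). In particular, any two non-backtracking walks of the same length ℓ in simple graphs of girth greater than s + 1 have identical window-s structural features. -/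
namespace SimpleGraph.Walk

variable {V : Type*} {G : SimpleGraph V} {u v : V}

/-- Segment of a walk from index `a` of length `n`. -/
def seg (W : G.Walk u v) : ∀ (a n : ℕ), a + n ≤ W.length → G.Walk (W.getVert a) (W.getVert (a + n))
  | _, 0, _ => Walk.nil
  | a, n + 1, h =>
    Walk.cons (W.adj_getVert_succ (by omega))
      ((W.seg (a + 1) n (by omega)).copy rfl (congrArg W.getVert (by omega)))

lemma seg_support (W : G.Walk u v) (a n : ℕ) (h : a + n ≤ W.length) :
    (W.seg a n h).support = (List.range (n + 1)).map (fun k => W.getVert (a + k)) := by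
  induction n generalizing a with
  | zero => simp [seg, List.range_succ]
  | succ n ih =>
    rw [seg, support_cons, support_copy, ih, List.range_succ_eq_map (n := n + 1), List.map_cons,
      List.map_map]
    simp only [Nat.add_zero, Function.comp_def]
    congr 1
    exact List.map_congr_left fun k _ => by rw [show a + 1 + k = a + k.succ by omega]

lemma seg_edges (W : G.Walk u v) (a n : ℕ) (h : a + n ≤ W.length) :
    (W.seg a n h).edges =
      (List.range n).map (fun k => s(W.getVert (a + k), W.getVert (a + k + 1))) := by
  induction n generalizing a with
  | zero => simp [seg]
  | succ n ih =>
    rw [seg, edges_cons, edges_copy, ih, List.range_succ_eq_map (n := n), List.map_cons, List.map_map]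
    simp only [Nat.add_zero, Function.comp_def]
    congr 1
    exact List.map_congr_left fun k _ => by
      rw [show a + 1 + k = a + k.succ by omega]

lemma seg_length (W : G.Walk u v) (a n : ℕ) (h : a + n ≤ W.length) :
    (W.seg a n h).length = n := by
  induction n generalizing a with
  | zero => simp [seg]
  | succ n ih => rw [seg]; simp [ih]

end SimpleGraph.Walk

open SimpleGraph Walk

lemma window_aux {V : Type*} (G : SimpleGraph V)
    (s : ℕ) (hs : 2 ≤ s) (hgirth : ((s + 1 : ℕ) : ℕ∞) < G.egirth)
    {u v : V} (W : G.Walk u v)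
    (hnb : ∀ i : ℕ, 1 ≤ i → i + 1 ≤ W.length → W.getVert (i + 1) ≠ W.getVert (i - 1)) :
    (∀ i j : ℕ, i ≤ W.length → 1 ≤ j → j ≤ s → j ≤ i →
        W.getVert i ≠ W.getVert (i - j)) ∧
    (∀ i j : ℕ, i ≤ W.length → 2 ≤ j → j ≤ s → j ≤ i →
        ¬ G.Adj (W.getVert i) (W.getVert (i - j))) := by
  classical
  have hle : ∀ {a : V} (c : G.Walk a a), c.IsCycle → s + 1 < c.length := by
    intro a c hc
    have h2 := lt_of_lt_of_le hgirth (SimpleGraph.le_egirth.mp le_rfl a c hc)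
    exact_mod_cast h2
  have dist : ∀ j, 1 ≤ j → j ≤ s → ∀ i, i ≤ W.length → j ≤ i →
      W.getVert i ≠ W.getVert (i - j) := by
    intro j
    induction j using Nat.strong_induction_on with
    | _ j IH =>
    intro hj1 hjs i hi hji heq
    rcases Nat.lt_or_ge j 3 with h3 | h3
    · interval_cases j
      · have h := W.adj_getVert_succ (show i - 1 < W.length by omega)
        rw [show i - 1 + 1 = i by omega] at h
        exact h.ne heq.symm
      · have h := hnb (i - 1) (by omega) (by omega)
        rw [show i - 1 + 1 = i by omega, show i - 1 - 1 = i - 2 by omega] at h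
        exact h heq
    · set a := i - j with ha
      have hseg : a + 1 + (j - 1) ≤ W.length := by omega
      have h1 : G.Adj (W.getVert a) (W.getVert (a + 1)) :=
        W.adj_getVert_succ (by omega)
      have hcast : W.getVert (a + 1 + (j - 1)) = W.getVert a :=
        (congrArg W.getVert (show a + 1 + (j - 1) = i by omega)).trans heq
      set Q := (W.seg (a + 1) (j - 1) hseg).copy rfl hcast with hQ
      have hQsup : Q.support = (List.range (j - 1 + 1)).map (fun k => W.getVert (a + 1 + k)) := by
        rw [hQ, support_copy, W.seg_support]
      have hQedges : Q.edges =
          (List.range (j - 1)).map (fun k => s(W.getVert (a + 1 + k), W.getVert (a + 1 + k + 1))) := by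
        rw [hQ, edges_copy, W.seg_edges]
      have hdist : ∀ k1 k2 : ℕ, k1 < k2 → k2 ≤ j - 1 →
          W.getVert (a + 1 + k1) ≠ W.getVert (a + 1 + k2) := by
        intro k1 k2 hlt hk2 he
        exact IH (k2 - k1) (by omega) (by omega) (by omega) (a + 1 + k2) (by omega) (by omega)
          (he.symm.trans (congrArg W.getVert (show a + 1 + k1 = a + 1 + k2 - (k2 - k1) by omega)))
      have hQpath : Q.IsPath := by
        rw [Walk.isPath_def, hQsup]
        refine List.Nodup.map_on ?_ List.nodup_range
        intro x hx y hy he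
        rw [List.mem_range] at hx hy
        by_contra hne
        rcases Nat.lt_or_ge x y with hxy | hxy
        · exact hdist x y hxy (by omega) he
        · exact hdist y x (by omega) (by omega) he.symm
      have hedge : s(W.getVert a, W.getVert (a + 1)) ∉ Q.edges := by
        rw [hQedges]
        simp only [List.mem_map, List.mem_range]
        rintro ⟨k, hk, he⟩
        rw [Sym2.eq_iff] at he
        rcases he with ⟨he1, he2⟩ | ⟨he1, he2⟩
        · exact IH (k + 1) (by omega) (by omega) (by omega) (a + 1 + k) (by omega) (by omega)
            (he1.trans (congrArg W.getVert (show a = a + 1 + k - (k + 1) by omega)))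
        · rcases Nat.eq_zero_or_pos k with rfl | hk0
          · exact IH 2 (by omega) (by omega) (by omega) (a + 1 + 0 + 1) (by omega) (by omega)
              (he2.trans (congrArg W.getVert (show a = a + 1 + 0 + 1 - 2 by omega)))
          · exact IH k (by omega) (by omega) (by omega) (a + 1 + k) (by omega) (by omega)
              (he1.trans (congrArg W.getVert (show a + 1 = a + 1 + k - k by omega)))
      have hcyc : (Walk.cons h1 Q).IsCycle := (Walk.cons_isCycle_iff Q h1).mpr ⟨hQpath, hedge⟩
      have hlen := hle _ hcyc
      rw [Walk.length_cons, hQ, Walk.length_copy, W.seg_length] at hlen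
      omega
  refine ⟨fun i j hi h1 h2 h3 => dist j h1 h2 i hi h3, ?_⟩
  intro i j hi hj2 hjs hji hadj
  have hseg : (i - j) + j ≤ W.length := by omega
  have hcast : W.getVert (i - j + j) = W.getVert i := congrArg W.getVert (by omega)
  set Q := (W.seg (i - j) j hseg).copy rfl hcast with hQ
  have hQsup : Q.support = (List.range (j + 1)).map (fun k => W.getVert (i - j + k)) := by
    rw [hQ, support_copy, W.seg_support]
  have hQedges : Q.edges =
      (List.range j).map (fun k => s(W.getVert (i - j + k), W.getVert (i - j + k + 1))) := by
    rw [hQ, edges_copy, W.seg_edges]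
  have hdist : ∀ k1 k2 : ℕ, k1 < k2 → k2 ≤ j →
      W.getVert (i - j + k1) ≠ W.getVert (i - j + k2) := by
    intro k1 k2 hlt hk2 he
    exact dist (k2 - k1) (by omega) (by omega) (i - j + k2) (by omega) (by omega)
      (he.symm.trans (congrArg W.getVert (show i - j + k1 = i - j + k2 - (k2 - k1) by omega)))
  have hQpath : Q.IsPath := by
    rw [Walk.isPath_def, hQsup]
    refine List.Nodup.map_on ?_ List.nodup_range
    intro x hx y hy he
    rw [List.mem_range] at hx hy
    by_contra hne
    rcases Nat.lt_or_ge x y with hxy | hxy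
    · exact hdist x y hxy (by omega) he
    · exact hdist y x (by omega) (by omega) he.symm
  have hedge : s(W.getVert i, W.getVert (i - j)) ∉ Q.edges := by
    rw [hQedges]
    simp only [List.mem_map, List.mem_range]
    rintro ⟨k, hk, he⟩
    rw [Sym2.eq_iff] at he
    rcases he with ⟨he1, he2⟩ | ⟨he1, he2⟩
    · exact dist (j - k) (by omega) (by omega) i (by omega) (by omega)
        (he1.symm.trans (congrArg W.getVert (show i - j + k = i - (j - k) by omega)))
    · rcases Nat.eq_zero_or_pos k with rfl | hk0
      · exact dist (j - 1) (by omega) (by omega) i (by omega) (by omega)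
          (he2.symm.trans (congrArg W.getVert (show i - j + 0 + 1 = i - (j - 1) by omega)))
      · exact dist k (by omega) (by omega) (i - j + k) (by omega) (by omega)
          (he1.trans (congrArg W.getVert (show i - j = i - j + k - k by omega)))
  have hcyc : (Walk.cons hadj Q).IsCycle := (Walk.cons_isCycle_iff Q hadj).mpr ⟨hQpath, hedge⟩
  have hlen := hle _ hcyc
  rw [Walk.length_cons, hQ, Walk.length_copy, W.seg_length] at hlen
  omega

/-- If `s ≥ 2` and `s + 1 < girth G`, then on a non-backtracking walk
`W` in `G` all equality indicators of the window-`s` structural feature are `0`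
(`w_i ≠ w_{i-j}` for `1 ≤ j ≤ s`, `j ≤ i`) and all adjacency indicators with gap at
least `2` are `0` (`w_i` not adjacent to `w_{i-j}` for `2 ≤ j ≤ s`, `j ≤ i`).
In particular, any two non-backtracking walks of the same length in simple graphs of
girth greater than `s + 1` have identical window-`s` structural features. -/
theorem nonbacktracking_window_feature_trivial {V : Type*} (G : SimpleGraph V)
    (s : ℕ) (hs : 2 ≤ s) (hgirth : ((s + 1 : ℕ) : ℕ∞) < G.egirth)
    {u v : V} (W : G.Walk u v)
    (hnb : ∀ i : ℕ, 1 ≤ i → i + 1 ≤ W.length → W.getVert (i + 1) ≠ W.getVert (i - 1)) :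
    ((∀ i j : ℕ, i ≤ W.length → 1 ≤ j → j ≤ s → j ≤ i →
        W.getVert i ≠ W.getVert (i - j)) ∧
     (∀ i j : ℕ, i ≤ W.length → 2 ≤ j → j ≤ s → j ≤ i →
        ¬ G.Adj (W.getVert i) (W.getVert (i - j)))) ∧
    (∀ (V' : Type*) (G' : SimpleGraph V') (u' v' : V') (W' : G'.Walk u' v'),
      ((s + 1 : ℕ) : ℕ∞) < G'.egirth →
      (∀ i : ℕ, 1 ≤ i → i + 1 ≤ W'.length → W'.getVert (i + 1) ≠ W'.getVert (i - 1)) →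
      W'.length = W.length →
      (∀ i j : ℕ, i ≤ W.length → 1 ≤ j → j ≤ s → j ≤ i →
        (W.getVert i = W.getVert (i - j) ↔ W'.getVert i = W'.getVert (i - j))) ∧
      (∀ i j : ℕ, i ≤ W.length → 2 ≤ j → j ≤ s → j ≤ i →
        (G.Adj (W.getVert i) (W.getVert (i - j)) ↔
          G'.Adj (W'.getVert i) (W'.getVert (i - j))))) := by
  obtain ⟨hW1, hW2⟩ := window_aux G s hs hgirth W hnb
  refine ⟨⟨hW1, hW2⟩, ?_⟩
  intro V' G' u' v' W' hg' hnb' hlen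
  obtain ⟨hW1', hW2'⟩ := window_aux G' s hs hg' W' hnb'
  refine ⟨fun i j hi h1 h2 h3 => ?_, fun i j hi h1 h2 h3 => ?_⟩
  · exact iff_of_false (hW1 i j hi h1 h2 h3) (hW1' i j (by omega) h1 h2 h3)
  · exact iff_of_false (hW2 i j hi h1 h2 h3) (hW2' i j (by omega) h1 h2 h3)
end

section
/- Let G and G' be simple graphs in which every vertex has degree exactly 2, and let s ≥ 2 be a window size with (s + 1 : ℕ∞) < girth(G) and (s + 1 : ℕ∞) < girth(G'). Let W = (w_0, …, w_ℓ) be a walk in G and W' = (w'_0, …, w'_ℓ) a walk in G' of the same length ℓ having the same backtracking pattern, i.e., for every 1 ≤ i ≤ ℓ − 1 one has w_{i+1} = w_{i−1} if and only if w'_{i+1} = w'_{i−1}. Then W and W' have the same window-s structural feature: for all i and all 1 ≤ j ≤ s with i − j ≥ 0, w_i = w_{i−j} if and only if w'_i = w'_{i−j}, and for all 2 ≤ j ≤ s with i − j ≥ 0, w_i is adjacent to w_{i−j} in G if and only if w'_i is adjacent to w'_{i−j} in G'. -/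
open SimpleGraph

namespace TwoRegAux

variable {V : Type*} {G : SimpleGraph V}

def mkWalk (f : ℕ → V) : (n : ℕ) → (∀ k < n, G.Adj (f k) (f (k+1))) → G.Walk (f 0) (f n)
  | 0, _ => .nil
  | n+1, h => .cons (h 0 n.succ_pos)
      (mkWalk (fun k => f (k+1)) n (fun k hk => h (k+1) (by omega)))

lemma mkWalk_length (f : ℕ → V) (n : ℕ) (h : ∀ k < n, G.Adj (f k) (f (k+1))) :
    (mkWalk f n h).length = n := by
  induction n generalizing f with
  | zero => rfl
  | succ n ih => simp [mkWalk, ih]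

lemma mkWalk_support (f : ℕ → V) (n : ℕ) (h : ∀ k < n, G.Adj (f k) (f (k+1))) :
    (mkWalk f n h).support = (List.range (n+1)).map f := by
  induction n generalizing f with
  | zero => rfl
  | succ n ih =>
      rw [mkWalk, SimpleGraph.Walk.support_cons, ih]
      rw [List.range_succ_eq_map (n := n+1), List.range_succ_eq_map (n := n)]
      simp [List.map_map, Function.comp_def]

lemma mkWalk_edges (f : ℕ → V) (n : ℕ) (h : ∀ k < n, G.Adj (f k) (f (k+1))) :
    (mkWalk f n h).edges = (List.range n).map (fun k => s(f k, f (k+1))) := by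
  induction n generalizing f with
  | zero => rfl
  | succ n ih =>
      rw [mkWalk, SimpleGraph.Walk.edges_cons, ih]
      rw [List.range_succ_eq_map (n := n)]
      simp [List.map_map, Function.comp_def]

lemma egirth_le_of_cycle {a : V} (c : G.Walk a a) (hc : c.IsCycle) :
    G.egirth ≤ c.length :=
  (le_egirth.mp le_rfl) a c hc

/-- Non-backtracking short walks have pairwise distinct vertices. -/
lemma nb_inj (s : ℕ) (hg : ((s + 1 : ℕ) : ℕ∞) < G.egirth) (j : ℕ) (hj : j ≤ s)
    (f : ℕ → V) (hadj : ∀ k < j, G.Adj (f k) (f (k+1)))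
    (hnb : ∀ k, 1 ≤ k → k + 1 ≤ j → f (k+1) ≠ f (k-1)) :
    ∀ a b, a < b → b ≤ j → f a ≠ f b := by
  suffices H : ∀ d a b, b - a = d → a < b → b ≤ j → f a ≠ f b by
    intro a b hab hbj; exact H (b - a) a b rfl hab hbj
  intro d
  induction d using Nat.strong_induction_on with
  | _ d ih =>
    intro a b hd hab hbj heq
    have hd1 : 1 ≤ d := by omega
    -- small cases
    rcases Nat.lt_or_ge d 3 with hd3 | hd3
    · interval_cases d
      · have hb : b = a + 1 := by omega
        subst hb
        exact (hadj a (by omega)).ne heq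
      · have hb : b = a + 2 := by omega
        subst hb
        exact hnb (a+1) (by omega) (by omega) (by simpa using heq.symm)
    · -- no inner repetition, else apply ih
      have hdist : ∀ x y, a ≤ x → x < y → y ≤ b → ¬(x = a ∧ y = b) → f x ≠ f y := by
        intro x y hax hxy hyb hne hfeq
        have hlt : y - x < d := by omega
        exact ih (y - x) hlt x y rfl hxy (le_trans hyb hbj) hfeq
      -- build the cycle
      have hadj' : ∀ k < b - (a+1), G.Adj (f (a+1+k)) (f (a+1+k+1)) := by
        intro k hk
        exact hadj (a+1+k) (by omega)
      have hend : f (a + 1 + (b - (a+1))) = f b := by congr 1; omega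
      have hend2 : f (a + 1 + (b - (a+1))) = f a := hend.trans heq.symm
      set w0 : G.Walk (f (a+1)) (f (a + 1 + (b - (a+1)))) := mkWalk _ _ hadj' with hw0
      set w : G.Walk (f (a+1)) (f a) := w0.copy rfl hend2 with hw
      have hsupp : w.support = (List.range (b - a)).map (fun k => f (a+1+k)) := by
        rw [hw, Walk.support_copy, hw0, mkWalk_support,
          show b - (a+1) + 1 = b - a from by omega]
      have hedges : w.edges = (List.range (b - (a+1))).map (fun k => s(f (a+1+k), f (a+1+k+1))) := by
        rw [hw, Walk.edges_copy, hw0, mkWalk_edges]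
        rfl
      have hpath : w.IsPath := by
        rw [Walk.isPath_def, hsupp]
        refine List.Nodup.map_on ?_ List.nodup_range
        intro x hx y hy hfxy
        simp only [List.mem_range] at hx hy
        by_contra hne
        rcases Nat.lt_or_ge x y with h' | h'
        · exact hdist (a+1+x) (a+1+y) (by omega) (by omega) (by omega) (by omega) hfxy
        · have h'' : y < x := by omega
          exact hdist (a+1+y) (a+1+x) (by omega) (by omega) (by omega) (by omega) hfxy.symm
      have hedge : s(f a, f (a+1)) ∉ w.edges := by
        rw [hedges]
        simp only [List.mem_map, List.mem_range, not_exists, not_and]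
        intro k hk hsym
        rw [Sym2.eq_iff] at hsym
        rcases hsym with ⟨h1, h2⟩ | ⟨h1, h2⟩
        · exact hdist a (a+1+k) (le_refl a) (by omega) (by omega) (by omega) h1.symm
        · -- f a = f (a+1+k+1), f (a+1) = f (a+1+k)
          rcases Nat.lt_or_ge (a+1+k+1) b with hb' | hb'
          · exact hdist a (a+1+k+1) (le_refl a) (by omega) (by omega) (by omega) h2.symm
          · have : a+1+k+1 = b := by omega
            have hk' : a + 1 < a+1+k := by omega
            exact hdist (a+1) (a+1+k) (by omega) hk' (by omega) (by omega) h1.symm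
      have hcyc : (Walk.cons (hadj a (by omega)) w).IsCycle := by
        rw [Walk.cons_isCycle_iff]
        exact ⟨hpath, hedge⟩
      have hle := egirth_le_of_cycle _ hcyc
      have hlen : (Walk.cons (hadj a (by omega)) w).length = b - a := by
        rw [Walk.length_cons, hw, Walk.length_copy, hw0, mkWalk_length]; omega
      rw [hlen] at hle
      have : ((s + 1 : ℕ) : ℕ∞) < ((b - a : ℕ) : ℕ∞) := lt_of_lt_of_le hg hle
      have : s + 1 < b - a := by exact_mod_cast this
      omega

/-- Non-backtracking short walks admit no chord closing them up. -/
lemma nb_no_chord (s : ℕ) (hg : ((s + 1 : ℕ) : ℕ∞) < G.egirth) (j : ℕ) (hj : j ≤ s)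
    (hj2 : 2 ≤ j)
    (f : ℕ → V) (hadj : ∀ k < j, G.Adj (f k) (f (k+1)))
    (hnb : ∀ k, 1 ≤ k → k + 1 ≤ j → f (k+1) ≠ f (k-1)) :
    ¬ G.Adj (f j) (f 0) := by
  intro hA
  have hinj := nb_inj s hg j hj f hadj hnb
  let p : G.Walk (f 0) (f j) := mkWalk f j hadj
  have hpath : p.IsPath := by
    rw [Walk.isPath_def, mkWalk_support]
    refine List.Nodup.map_on ?_ List.nodup_range
    intro x hx y hy hfxy
    simp only [List.mem_range] at hx hy
    by_contra hne
    rcases Nat.lt_or_ge x y with h' | h'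
    · exact hinj x y h' (by omega) hfxy
    · exact hinj y x (by omega) (by omega) hfxy.symm
  have hedge : s(f j, f 0) ∉ p.edges := by
    rw [mkWalk_edges]
    simp only [List.mem_map, List.mem_range, not_exists, not_and]
    intro k hk hsym
    rw [Sym2.eq_iff] at hsym
    rcases hsym with ⟨h1, h2⟩ | ⟨h1, h2⟩
    · exact hinj k j hk (le_refl j) h1
    · rcases Nat.lt_or_ge (k+1) j with hb' | hb'
      · exact hinj (k+1) j hb' (le_refl j) h2
      · have hkj : k + 1 = j := by omega
        exact hinj 0 k (by omega) (by omega) h1.symm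
  have hcyc : (Walk.cons hA p).IsCycle := by
    rw [Walk.cons_isCycle_iff]; exact ⟨hpath, hedge⟩
  have hle := egirth_le_of_cycle _ hcyc
  have hlen : (Walk.cons hA p).length = j + 1 := by
    rw [Walk.length_cons, mkWalk_length]
  rw [hlen] at hle
  have : ((s + 1 : ℕ) : ℕ∞) < ((j + 1 : ℕ) : ℕ∞) := lt_of_lt_of_le hg hle
  have : s + 1 < j + 1 := by exact_mod_cast this
  omega


lemma two_reg_other [Fintype V] [DecidableRel G.Adj] (h2 : ∀ x : V, G.degree x = 2)
    {v a b c : V} (ha : G.Adj v a) (hb : G.Adj v b) (hc : G.Adj v c)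
    (hab : a ≠ b) (hac : a ≠ c) : b = c := by
  classical
  by_contra hbc
  have hsub : ({a, b, c} : Finset V) ⊆ G.neighborFinset v := by
    intro x hx
    simp only [Finset.mem_insert, Finset.mem_singleton] at hx
    rcases hx with rfl | rfl | rfl <;> simp [SimpleGraph.mem_neighborFinset, ha, hb, hc]
  have hcard : ({a, b, c} : Finset V).card = 3 := by
    rw [Finset.card_insert_of_notMem (by simp [hab, hac]),
      Finset.card_insert_of_notMem (by simp [hbc]), Finset.card_singleton]
  have := Finset.card_le_card hsub
  rw [hcard, SimpleGraph.card_neighborFinset_eq_degree, h2 v] at this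
  omega
lemma key [Fintype V] [DecidableRel G.Adj] (hdeg : ∀ x : V, G.degree x = 2)
    (s : ℕ) (hg : ((s + 1 : ℕ) : ℕ∞) < G.egirth) :
    ∀ j, j ≤ s → ∀ (f : ℕ → V) (δ : ℕ → ℤ),
      (∀ k < j, G.Adj (f k) (f (k+1))) →
      (∀ k, 1 ≤ k → k ≤ j → δ k = 1 ∨ δ k = -1) →
      (∀ k, 1 ≤ k → k + 1 ≤ j →
        ((f (k+1) = f (k-1) → δ (k+1) = -δ k) ∧ (f (k+1) ≠ f (k-1) → δ (k+1) = δ k))) →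
      ((f j = f 0 ↔ (∑ k ∈ Finset.range j, δ (k+1)) = 0) ∧
       (G.Adj (f j) (f 0) ↔ ((∑ k ∈ Finset.range j, δ (k+1)) = 1 ∨
          (∑ k ∈ Finset.range j, δ (k+1)) = -1))) := by
  intro j
  induction j using Nat.strong_induction_on with
  | _ j ih =>
  intro hj f δ hadj hpm hrec
  rcases Nat.eq_zero_or_pos j with rfl | hj1
  · constructor
    · simp
    · simp only [Finset.range_zero, Finset.sum_empty]
      constructor
      · intro h; exact absurd h (G.irrefl)
      · intro h; omega
  by_cases hbt : ∃ m, 1 ≤ m ∧ m + 1 ≤ j ∧ f (m+1) = f (m-1)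
  · -- splice case
    obtain ⟨m, hm1, hmj, hbm⟩ := hbt
    have hj2 : 2 ≤ j := by omega
    set g : ℕ → V := fun k => if k < m then f k else f (k+2) with hgdef
    set δ' : ℕ → ℤ := fun k => if k < m then δ k else δ (k+2) with hδ'def
    have hgval : ∀ k, g k = if k < m then f k else f (k+2) := fun k => rfl
    have hδ'val : ∀ k, δ' k = if k < m then δ k else δ (k+2) := fun k => rfl
    have hadj' : ∀ k < j - 2, G.Adj (g k) (g (k+1)) := by
      intro k hk
      rcases Nat.lt_or_ge (k+1) m with h1 | h1
      · rw [hgval k, hgval (k+1), if_pos (by omega), if_pos h1]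
        exact hadj k (by omega)
      · rcases Nat.lt_or_ge k m with h2 | h2
        · -- k + 1 = m
          have hkm : k + 1 = m := by omega
          rw [hgval k, hgval (k+1), if_pos h2, if_neg (by omega)]
          have : f k = f (m+1) := by rw [hbm]; congr 1; omega
          rw [this, show k + 1 + 2 = m + 2 by omega]
          exact hadj (m+1) (by omega)
        · rw [hgval k, hgval (k+1), if_neg (by omega), if_neg (by omega)]
          exact hadj (k+2) (by omega)
    have hpm' : ∀ k, 1 ≤ k → k ≤ j - 2 → δ' k = 1 ∨ δ' k = -1 := by
      intro k h1 h2
      rw [hδ'val]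
      split
      · exact hpm k h1 (by omega)
      · exact hpm (k+2) (by omega) (by omega)
    have hrec' : ∀ k, 1 ≤ k → k + 1 ≤ j - 2 →
        ((g (k+1) = g (k-1) → δ' (k+1) = -δ' k) ∧ (g (k+1) ≠ g (k-1) → δ' (k+1) = δ' k)) := by
      intro k hk1 hk2
      rcases Nat.lt_or_ge (k+1) m with h1 | h1
      · -- all inside: indices k-1, k, k+1 < m
        rw [hgval (k+1), hgval (k-1), hδ'val (k+1), hδ'val k,
          if_pos h1, if_pos (by omega), if_pos h1, if_pos (by omega)]
        exact hrec k hk1 (by omega)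
      · rcases Nat.lt_or_ge k m with h2 | h2
        · -- joint: k + 1 = m
          have hkm : m = k + 1 := by omega
          obtain ⟨t, rfl⟩ : ∃ t, k = t + 1 := ⟨k - 1, by omega⟩
          subst hkm
          -- m = t + 2
          have gA : g (t+1+1) = f (t+4) := by
            rw [hgval, if_neg (by omega)]
          have gB : g (t+1-1) = f t := by
            show g t = f t
            rw [hgval, if_pos (by omega)]
          have dA : δ' (t+1+1) = δ (t+4) := by
            rw [hδ'val, if_neg (by omega)]
          have dB : δ' (t+1) = δ (t+1) := by
            rw [hδ'val, if_pos (by omega)]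
          rw [gA, gB, dA, dB]
          -- goal about f (t+4), f t, δ (t+4), δ (t+1); known hbm : f (t+3) = f (t+1)
          have hbm' : f (t+3) = f (t+1) := by
            have := hbm
            rwa [show t + 1 + 1 + 1 = t + 3 by omega, show t + 1 + 1 - 1 = t + 1 by omega] at this
          have hrec1 := hrec (t+1) (by omega) (by omega)
          have hrec2 := hrec (t+2) (by omega) (by omega)
          have hrec3 := hrec (t+3) (by omega) (by omega)
          simp only [show t + 1 + 1 = t + 2 by omega, show t + 1 - 1 = t by omega,
            show t + 2 + 1 = t + 3 by omega, show t + 2 - 1 = t + 1 by omega,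
            show t + 3 + 1 = t + 4 by omega, show t + 3 - 1 = t + 2 by omega] at hrec1 hrec2 hrec3 ⊢
          have d3 : δ (t+3) = -δ (t+2) := hrec2.1 hbm'
          constructor
          · intro h -- f (t+4) = f t
            by_cases hq : f (t+4) = f (t+2)
            · have e1 : f (t+2) = f t := hq.symm.trans h
              have d1 : δ (t+2) = -δ (t+1) := hrec1.1 e1
              have d4 : δ (t+4) = -δ (t+3) := hrec3.1 hq
              linarith
            · have d4 : δ (t+4) = δ (t+3) := hrec3.2 hq
              have d1 : δ (t+2) = δ (t+1) := hrec1.2 (fun e => hq (h.trans e.symm))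
              linarith
          · intro h -- f (t+4) ≠ f t
            by_cases hq : f (t+4) = f (t+2)
            · have d4 : δ (t+4) = -δ (t+3) := hrec3.1 hq
              have d1 : δ (t+2) = δ (t+1) := hrec1.2 (fun e => h (hq.trans e))
              linarith
            · -- 2-regularity: f(t+4), f(t+2), f(t) all neighbors of f(t+3)=f(t+1)
              have a1 : G.Adj (f (t+3)) (f (t+4)) := hadj (t+3) (by omega)
              have a2 : G.Adj (f (t+3)) (f (t+2)) := by
                rw [hbm']; exact hadj (t+1) (by omega)
              have a3 : G.Adj (f (t+3)) (f t) := by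
                rw [hbm']; exact (hadj t (by omega)).symm
              have e1 : f (t+2) = f t := two_reg_other hdeg a1 a2 a3 hq h
              have d1 : δ (t+2) = -δ (t+1) := hrec1.1 e1
              have d4 : δ (t+4) = δ (t+3) := hrec3.2 hq
              linarith
        · -- after joint: k ≥ m
          have hk3 : k + 3 ≤ j := by omega
          have hrecK := hrec (k+2) (by omega) (by omega)
          rw [show k + 2 + 1 = k + 3 by omega, show k + 2 - 1 = k + 1 by omega] at hrecK
          have gA : g (k+1) = f (k+3) := by
            rw [hgval, if_neg (by omega)]
          have dA : δ' (k+1) = δ (k+3) := by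
            rw [hδ'val, if_neg (by omega)]
          have dB : δ' k = δ (k+2) := by
            rw [hδ'val, if_neg (by omega)]
          have gB : g (k-1) = f (k+1) := by
            rcases Nat.lt_or_ge (k-1) m with h3 | h3
            · have hkm : k = m := by omega
              rw [hgval, if_pos h3, hkm]
              rw [hbm]
            · rw [hgval, if_neg (by omega)]; congr 1; omega
          rw [gA, gB, dA, dB]
          exact hrecK
    have IH := ih (j-2) (by omega) (by omega) g δ' hadj' hpm' hrec'
    -- transfer
    have hdm : δ (m+1) = -δ m := (hrec m hm1 hmj).1 hbm
    have hsum : (∑ k ∈ Finset.range (j-2), δ' (k+1)) = ∑ k ∈ Finset.range j, δ (k+1) := by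
      have e1 : ∀ k, δ' (k+1) = if k + 1 < m then δ (k+1) else δ (k+3) := by
        intro k; rw [hδ'val]
      calc (∑ k ∈ Finset.range (j-2), δ' (k+1))
          = (∑ k ∈ Finset.Ico 0 (m-1), δ' (k+1)) + (∑ k ∈ Finset.Ico (m-1) (j-2), δ' (k+1)) := by
            rw [Finset.sum_Ico_consecutive _ (by omega) (by omega), ← Finset.range_eq_Ico]
        _ = (∑ k ∈ Finset.Ico 0 (m-1), δ (k+1)) + (∑ k ∈ Finset.Ico (m-1) (j-2), δ (k+3)) := by
            congr 1
            · exact Finset.sum_congr rfl (fun k hk => by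
                rw [e1, if_pos (by simp only [Finset.mem_Ico] at hk; omega)])
            · exact Finset.sum_congr rfl (fun k hk => by
                rw [e1, if_neg (by simp only [Finset.mem_Ico] at hk; omega)])
        _ = (∑ k ∈ Finset.Ico 0 (m-1), δ (k+1)) + (∑ k ∈ Finset.Ico (m+1) j, δ (k+1)) := by
            congr 1
            rw [Finset.sum_Ico_eq_sum_range, Finset.sum_Ico_eq_sum_range]
            refine Finset.sum_congr (by congr 1; omega) (fun k _ => by congr 1; omega)
        _ = (∑ k ∈ Finset.Ico 0 (m-1), δ (k+1)) + ((∑ k ∈ Finset.Ico (m-1) (m+1), δ (k+1))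
              + (∑ k ∈ Finset.Ico (m+1) j, δ (k+1))) := by
            have hmid : (∑ k ∈ Finset.Ico (m-1) (m+1), δ (k+1)) = 0 := by
              rw [show m + 1 = (m-1) + 1 + 1 by omega, Finset.sum_Ico_succ_top (by omega),
                Finset.sum_Ico_succ_top (by omega), Finset.Ico_self, Finset.sum_empty,
                show (m-1) + 1 = m by omega, hdm]
              ring
            rw [hmid]; ring
        _ = ∑ k ∈ Finset.range j, δ (k+1) := by
            rw [Finset.sum_Ico_consecutive _ (by omega) (by omega),
              Finset.sum_Ico_consecutive _ (by omega) (by omega), ← Finset.range_eq_Ico]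
    have hgj : g (j-2) = f j := by
      rw [hgval]
      split
      · -- j - 2 < m, so m = j - 1 : f (j-2) = f (m-1) = f (m+1) = f j
        have hm : m = j - 1 := by omega
        have : f (j - 2) = f (m - 1) := by congr 1; omega
        rw [this, ← hbm]; congr 1; omega
      · congr 1; omega
    have hg0 : g 0 = f 0 := by rw [hgval, if_pos (by omega)]
    rw [hgj, hg0, hsum] at IH
    exact IH
  · -- non-backtracking case
    push_neg at hbt
    have hnb : ∀ k, 1 ≤ k → k + 1 ≤ j → f (k+1) ≠ f (k-1) := hbt
    have hconst : ∀ k, 1 ≤ k → k ≤ j → δ k = δ 1 := by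
      intro k
      induction k with
      | zero => omega
      | succ n ihn =>
          intro _ hn
          rcases Nat.eq_zero_or_pos n with rfl | hn1
          · rfl
          · have := (hrec n hn1 (by omega)).2 (hnb n hn1 (by omega))
            rw [this, ihn hn1 (by omega)]
    have hsum : (∑ k ∈ Finset.range j, δ (k+1)) = (j : ℤ) * δ 1 := by
      rw [Finset.sum_congr rfl (fun k hk => hconst (k+1) (by omega)
        (by simp only [Finset.mem_range] at hk; omega)), Finset.sum_const,
        Finset.card_range, nsmul_eq_mul]
    have hδ1 := hpm 1 le_rfl hj1
    have hne : f j ≠ f 0 := fun h =>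
      nb_inj s hg j hj f hadj hnb 0 j hj1 le_rfl h.symm
    constructor
    · rw [hsum]
      constructor
      · intro h; exact absurd h hne
      · intro h
        exfalso
        rcases hδ1 with h1 | h1 <;> rw [h1] at h <;>
          simp only [mul_one, mul_neg_one, neg_eq_zero] at h <;> omega
    · rw [hsum]
      rcases Nat.lt_or_ge j 2 with hjs | hjs
      · have hj1' : j = 1 := by omega
        subst hj1'
        constructor
        · intro _; rcases hδ1 with h1 | h1 <;> rw [h1] <;> [left; right] <;> ring
        · intro _; exact (hadj 0 (by omega)).symm
      · have hnA := nb_no_chord s hg j hj hjs f hadj hnb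
        constructor
        · intro h; exact absurd h hnA
        · intro h
          exfalso
          rcases hδ1 with h1 | h1 <;> rw [h1] at h <;>
            simp only [mul_one, mul_neg_one] at h <;> omega

theorem main_window {V V' : Type*} [Fintype V] [Fintype V']
    (G : SimpleGraph V) (G' : SimpleGraph V')
    [DecidableRel G.Adj] [DecidableRel G'.Adj]
    (h2reg : ∀ x : V, G.degree x = 2) (h2reg' : ∀ x : V', G'.degree x = 2)
    (s : ℕ)
    (hgirth : ((s + 1 : ℕ) : ℕ∞) < G.egirth) (hgirth' : ((s + 1 : ℕ) : ℕ∞) < G'.egirth)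
    {u v : V} {u' v' : V'} (W : G.Walk u v) (W' : G'.Walk u' v')
    (hlen : W'.length = W.length)
    (hpat : ∀ i : ℕ, 1 ≤ i → i + 1 ≤ W.length →
      (W.getVert (i + 1) = W.getVert (i - 1) ↔ W'.getVert (i + 1) = W'.getVert (i - 1)))
    (i j : ℕ) (hi : i ≤ W.length) (hjs : j ≤ s) (hji : j ≤ i) :
    (W.getVert i = W.getVert (i - j) ↔ W'.getVert i = W'.getVert (i - j)) ∧
    (G.Adj (W.getVert i) (W.getVert (i - j)) ↔
      G'.Adj (W'.getVert i) (W'.getVert (i - j))) := by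
  classical
  set f : ℕ → V := fun k => W.getVert (i - j + k) with hf
  set f' : ℕ → V' := fun k => W'.getVert (i - j + k) with hf'
  have hfval : ∀ k, f k = W.getVert (i - j + k) := fun _ => rfl
  have hf'val : ∀ k, f' k = W'.getVert (i - j + k) := fun _ => rfl
  -- the common sign sequence
  let δ : ℕ → ℤ := fun k => Nat.rec (motive := fun _ => ℤ) 1
    (fun n ih => if n = 0 then 1 else if f (n+1) = f (n-1) then -ih else ih) k
  have hδ0 : ∀ n : ℕ, δ (n+1) = if n = 0 then 1
      else if f (n+1) = f (n-1) then -δ n else δ n := fun _ => rfl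
  have hpm : ∀ k, 1 ≤ k → k ≤ j → δ k = 1 ∨ δ k = -1 := by
    intro k
    induction k with
    | zero => omega
    | succ n ihn =>
        intro _ hn
        rw [hδ0 n]
        rcases Nat.eq_zero_or_pos n with rfl | hn1
        · rw [if_pos rfl]; left; rfl
        · rw [if_neg (by omega)]
          rcases ihn hn1 (by omega) with h | h <;> rw [h] <;> split <;> simp
  -- the backtracking patterns agree on the window
  have hiff : ∀ k, 1 ≤ k → k + 1 ≤ j →
      (f (k+1) = f (k-1) ↔ f' (k+1) = f' (k-1)) := by
    intro k hk1 hk2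
    have h1 : 1 ≤ i - j + k := by omega
    have h2 : (i - j + k) + 1 ≤ W.length := by omega
    have e1 : i - j + (k+1) = (i - j + k) + 1 := by omega
    have e2 : i - j + (k-1) = (i - j + k) - 1 := by omega
    rw [hfval, hf'val, hfval, hf'val, e1, e2]
    exact hpat (i - j + k) h1 h2
  have hadj : ∀ k < j, G.Adj (f k) (f (k+1)) := by
    intro k hk
    rw [hfval, hfval, show i - j + (k+1) = (i - j + k) + 1 by omega]
    exact W.adj_getVert_succ (by omega)
  have hadj' : ∀ k < j, G'.Adj (f' k) (f' (k+1)) := by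
    intro k hk
    rw [hf'val, hf'val, show i - j + (k+1) = (i - j + k) + 1 by omega]
    exact W'.adj_getVert_succ (by omega)
  have hrecf : ∀ k, 1 ≤ k → k + 1 ≤ j →
      ((f (k+1) = f (k-1) → δ (k+1) = -δ k) ∧ (f (k+1) ≠ f (k-1) → δ (k+1) = δ k)) := by
    intro k hk1 _
    rw [hδ0 k, if_neg (by omega)]
    constructor
    · intro h; rw [if_pos h]
    · intro h; rw [if_neg h]
  have hrecf' : ∀ k, 1 ≤ k → k + 1 ≤ j →
      ((f' (k+1) = f' (k-1) → δ (k+1) = -δ k) ∧ (f' (k+1) ≠ f' (k-1) → δ (k+1) = δ k)) := by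
    intro k hk1 hk2
    have h := hrecf k hk1 hk2
    have hi2 := hiff k hk1 hk2
    exact ⟨fun e => h.1 (hi2.mpr e), fun e => h.2 (fun e' => e (hi2.mp e'))⟩
  have K := key h2reg s hgirth j hjs f δ hadj hpm hrecf
  have K' := key h2reg' s hgirth' j hjs f' δ hadj' hpm hrecf'
  have e_top : i - j + j = i := by omega
  have hfj : f j = W.getVert i := by rw [hfval, e_top]
  have hf0 : f 0 = W.getVert (i - j) := by rw [hfval, Nat.add_zero]
  have hfj' : f' j = W'.getVert i := by rw [hf'val, e_top]
  have hf0' : f' 0 = W'.getVert (i - j) := by rw [hf'val, Nat.add_zero]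
  rw [hfj, hf0] at K
  rw [hfj', hf0'] at K'
  exact ⟨K.1.trans K'.1.symm, K.2.trans K'.2.symm⟩

end TwoRegAux

/-- Let `G`, `G'` be 2-regular graphs, and `s ≥ 2` a window size with
`s + 1` less than both girths. If walks `W` in `G` and `W'` in `G'` have the same length
and the same backtracking pattern, then they have the same window-`s` structural
feature: equality indicators agree, and adjacency indicators agree. -/
theorem two_regular_same_pattern_same_feature {V V' : Type*} [Fintype V] [Fintype V']
    (G : SimpleGraph V) (G' : SimpleGraph V')
    [DecidableRel G.Adj] [DecidableRel G'.Adj]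
    (h2reg : ∀ x : V, G.degree x = 2) (h2reg' : ∀ x : V', G'.degree x = 2)
    (s : ℕ) (hs : 2 ≤ s)
    (hgirth : ((s + 1 : ℕ) : ℕ∞) < G.egirth) (hgirth' : ((s + 1 : ℕ) : ℕ∞) < G'.egirth)
    {u v : V} {u' v' : V'} (W : G.Walk u v) (W' : G'.Walk u' v')
    (hlen : W'.length = W.length)
    (hpat : ∀ i : ℕ, 1 ≤ i → i + 1 ≤ W.length →
      (W.getVert (i + 1) = W.getVert (i - 1) ↔ W'.getVert (i + 1) = W'.getVert (i - 1))) :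
    (∀ i j : ℕ, i ≤ W.length → 1 ≤ j → j ≤ s → j ≤ i →
      (W.getVert i = W.getVert (i - j) ↔ W'.getVert i = W'.getVert (i - j))) ∧
    (∀ i j : ℕ, i ≤ W.length → 2 ≤ j → j ≤ s → j ≤ i →
      (G.Adj (W.getVert i) (W.getVert (i - j)) ↔
        G'.Adj (W'.getVert i) (W'.getVert (i - j)))) := by
  constructor
  · intro i j hi _ hjs hji
    exact (TwoRegAux.main_window G G' h2reg h2reg' s hgirth hgirth' W W' hlen hpat
      i j hi hjs hji).1
  · intro i j hi _ hjs hji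
    exact (TwoRegAux.main_window G G' h2reg h2reg' s hgirth hgirth' W W' hlen hpat
      i j hi hjs hji).2
end

section
/- Let n ≥ 6 be even, let s ≥ 2 be a window size with 2(s + 1) < n, and let ℓ ≥ 1. Let G be the cycle graph on n vertices and let G' be the disjoint union of two cycle graphs on n/2 vertices each. Then for every possible window-s structural feature F, the number of walks of length ℓ in G whose window-s structural feature equals F is equal to the number of walks of length ℓ in G' whose window-s structural feature equals F. (Consequently, random walks of any length in the two graphs induce identical distributions of walk feature matrices, so the two graphs are indistinguishable by CRaWl with window size s.) -/
/-- The window-`s` structural feature of the walk `W` equals the feature described by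
the indicator functions `Feq` (equality indicators, for gaps `1 ≤ j ≤ s`) and
`Fadj` (adjacency indicators, for gaps `2 ≤ j ≤ s`); indicators for `i - j < 0`
are `0` on both sides by convention, hence not constrained. -/
def windowFeatureEq {V : Type*} (G : SimpleGraph V) {u v : V} (W : G.Walk u v)
    (s : ℕ) (Feq Fadj : ℕ → ℕ → Bool) : Prop :=
  (∀ i j : ℕ, i ≤ W.length → 1 ≤ j → j ≤ s → j ≤ i →
    (W.getVert i = W.getVert (i - j) ↔ Feq i j = true)) ∧
  (∀ i j : ℕ, i ≤ W.length → 2 ≤ j → j ≤ s → j ≤ i →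
    (G.Adj (W.getVert i) (W.getVert (i - j)) ↔ Fadj i j = true))

open SimpleGraph in
/-- A "step system" on a graph: every vertex has exactly the two (distinct) neighbours
`step v true` and `step v false`. -/
structure CrawlAux.StepSystem {V : Type*} (G : SimpleGraph V) where
  step : V → Bool → V
  adj_step : ∀ v b, G.Adj v (step v b)
  step_ne : ∀ v, step v true ≠ step v false
  eq_step : ∀ {v w}, G.Adj v w → w = step v true ∨ w = step v false

namespace CrawlAux

open SimpleGraph
open Fin.CommRing

namespace StepSystem

variable {V : Type*} [DecidableEq V] {G : SimpleGraph V} (S : StepSystem G)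

def endpt (u : V) (σ : List Bool) : V := σ.foldl S.step u

@[simp] lemma endpt_nil (u : V) : S.endpt u [] = u := rfl

@[simp] lemma endpt_cons (u : V) (b : Bool) (σ : List Bool) :
    S.endpt u (b :: σ) = S.endpt (S.step u b) σ := rfl

def walkOfSteps : (u : V) → (σ : List Bool) → G.Walk u (S.endpt u σ)
  | _, [] => Walk.nil
  | u, b :: σ => Walk.cons (S.adj_step u b) (walkOfSteps (S.step u b) σ)

def steps : {u v : V} → G.Walk u v → List Bool
  | _, _, Walk.nil => []
  | u, _, Walk.cons (v := x) _ W => (decide (x = S.step u true)) :: steps W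

@[simp] lemma length_walkOfSteps (u : V) (σ : List Bool) :
    (S.walkOfSteps u σ).length = σ.length := by
  induction σ generalizing u with
  | nil => rfl
  | cons b σ ih => simp [walkOfSteps, ih]

@[simp] lemma getVert_walkOfSteps (u : V) (σ : List Bool) (i : ℕ) :
    (S.walkOfSteps u σ).getVert i = S.endpt u (σ.take i) := by
  induction σ generalizing u i with
  | nil => cases i <;> rfl
  | cons b σ ih =>
    cases i with
    | zero => simp [walkOfSteps, Walk.getVert_zero]
    | succ i => simpa [walkOfSteps, Walk.getVert_cons_succ] using ih (S.step u b) i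

@[simp] lemma steps_walkOfSteps (u : V) (σ : List Bool) :
    S.steps (S.walkOfSteps u σ) = σ := by
  induction σ generalizing u with
  | nil => rfl
  | cons b σ ih =>
    simp only [walkOfSteps, steps, ih]
    congr 1
    cases b with
    | true => simp
    | false => simpa using (S.step_ne u).symm
    exact ih _

lemma heq_cons {u x v v' : V} (h h' : G.Adj u x) (W : G.Walk x v) (W' : G.Walk x v')
    (hv : v = v') (hW : HEq W W') : HEq (Walk.cons h W) (Walk.cons h' W') := by
  subst hv
  rw [heq_iff_eq] at hW ⊢
  rw [hW]

lemma walkOfSteps_steps : ∀ {u v : V} (W : G.Walk u v),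
    (⟨v, W⟩ : Σ v, G.Walk u v) = ⟨S.endpt u (S.steps W), S.walkOfSteps u (S.steps W)⟩ := by
  intro u v W
  induction W with
  | nil => rfl
  | @cons u x v h W ih =>
    show (⟨v, Walk.cons h W⟩ : Σ v, G.Walk u v)
      = ⟨S.endpt u (decide (x = S.step u true) :: S.steps W),
          S.walkOfSteps u (decide (x = S.step u true) :: S.steps W)⟩
    generalize hB : (decide (x = S.step u true)) = b
    have hb : S.step u b = x := by
      subst hB
      rcases S.eq_step h with h1 | h1
      · simp [h1]
      · have : decide (x = S.step u true) = false := by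
          simp [h1]; exact (S.step_ne u).symm
        rw [this, h1]
    subst hb
    rw [Sigma.ext_iff] at ih ⊢
    obtain ⟨h1, h2⟩ := ih
    dsimp only at h1 h2 ⊢
    exact ⟨h1, heq_cons h (S.adj_step u b) W _ h1 h2⟩

/-- Encoding of all walks in `G` by (start vertex, list of steps). -/
def sigmaEquiv : (Σ u v : V, G.Walk u v) ≃ V × List Bool where
  toFun p := (p.1, S.steps p.2.2)
  invFun x := ⟨x.1, S.endpt x.1 x.2, S.walkOfSteps x.1 x.2⟩
  left_inv p := by
    obtain ⟨u, v, W⟩ := p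
    exact (congrArg (fun q : (Σ v, G.Walk u v) => (⟨u, q.1, q.2⟩ : Σ u v : V, G.Walk u v))
      (S.walkOfSteps_steps W)).symm
  right_inv x := by obtain ⟨u, σ⟩ := x; simp

end StepSystem

/-! ### Integer step sums -/

def ιZ (b : Bool) : ℤ := if b then 1 else -1

def psum (σ : List Bool) (i : ℕ) : ℤ := ((σ.take i).map ιZ).sum

def dd (σ : List Bool) (i j : ℕ) : ℤ := psum σ i - psum σ (i - j)

lemma abs_psum_succ_sub (σ : List Bool) (k : ℕ) : |psum σ (k+1) - psum σ k| ≤ 1 := by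
  unfold psum
  rw [List.take_succ, List.map_append, List.sum_append, add_sub_cancel_left]
  rcases h : σ[k]? with _ | b
  · simp
  · cases b <;> simp [ιZ]

lemma abs_psum_sub (σ : List Bool) (a d : ℕ) : |psum σ (a + d) - psum σ a| ≤ (d : ℤ) := by
  induction d with
  | zero => simp
  | succ d ih =>
    have h1 := abs_psum_succ_sub σ (a + d)
    calc |psum σ (a + (d+1)) - psum σ a|
        ≤ |psum σ (a + d + 1) - psum σ (a + d)| + |psum σ (a + d) - psum σ a| := by
          rw [show a + (d+1) = a + d + 1 by ring]; exact abs_sub_le _ _ _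
      _ ≤ (d + 1 : ℤ) := by push_cast; linarith

lemma abs_dd (σ : List Bool) (i j : ℕ) (hji : j ≤ i) : |dd σ i j| ≤ (j : ℤ) := by
  have := abs_psum_sub σ (i - j) j
  rwa [Nat.sub_add_cancel hji] at this

/-- The structural feature, expressed purely in terms of the step list. -/
def Q (s : ℕ) (Feq Fadj : ℕ → ℕ → Bool) (σ : List Bool) : Prop :=
  (∀ i j : ℕ, i ≤ σ.length → 1 ≤ j → j ≤ s → j ≤ i → (dd σ i j = 0 ↔ Feq i j = true)) ∧
  (∀ i j : ℕ, i ≤ σ.length → 2 ≤ j → j ≤ s → j ≤ i →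
    ((dd σ i j = 1 ∨ dd σ i j = -1) ↔ Fadj i j = true))

/-! ### Modular arithmetic in `Fin (m+3)` -/

def ιF (m : ℕ) (b : Bool) : Fin (m+3) := if b then 1 else -1

lemma ιF_eq_cast (m : ℕ) (b : Bool) : ιF m b = ((ιZ b : ℤ) : Fin (m+3)) := by
  cases b <;> simp [ιF, ιZ]

lemma fin_cast_eq_zero_iff (m : ℕ) (a : ℤ) : ((a : Fin (m+3)) = 0) ↔ ((m+3 : ℕ) : ℤ) ∣ a :=
  ZMod.intCast_zmod_eq_zero_iff_dvd a (m+3)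

lemma fin_cast_eq_zero_of_small (m : ℕ) (a : ℤ) (h : |a| < (m+3 : ℤ)) :
    ((a : Fin (m+3)) = 0) ↔ a = 0 := by
  rw [fin_cast_eq_zero_iff]
  constructor
  · intro hd
    exact Int.eq_zero_of_abs_lt_dvd hd (by exact_mod_cast h)
  · rintro rfl; exact dvd_zero _

lemma fin_cast_eq_one_of_small (m : ℕ) (a : ℤ) (h : |a - 1| < (m+3 : ℤ)) :
    ((a : Fin (m+3)) = 1) ↔ a = 1 := by
  have h1 : (1 : Fin (m+3)) = ((1 : ℤ) : Fin (m+3)) := by push_cast; ring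
  rw [h1, ← sub_eq_zero, ← Int.cast_sub, fin_cast_eq_zero_of_small _ _ h, sub_eq_zero]

/-! ### The cycle graph step system -/

def cycleSS (m : ℕ) : StepSystem (cycleGraph (m+3)) where
  step v b := v + ιF m b
  adj_step v b := by
    rw [cycleGraph_adj]
    cases b
    · left; simp only [ιF, Bool.false_eq_true, if_false]; ring
    · right; simp only [ιF, if_true]; ring
  step_ne v := by
    intro h
    have h2 : (1 : Fin (m+3)) = -1 := by
      have := add_left_cancel h
      simpa [ιF] using this
    have h3 : ((2 : ℤ) : Fin (m+3)) = 0 := by push_cast; linear_combination h2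
    rw [fin_cast_eq_zero_iff] at h3
    have := Int.le_of_dvd (by norm_num) h3
    have : (m : ℤ) + 3 ≤ 2 := by exact_mod_cast this
    omega
  eq_step {v w} h := by
    rw [cycleGraph_adj] at h
    rcases h with h | h
    · right; simp only [ιF, Bool.false_eq_true, if_false]; linear_combination -h
    · left; simp only [ιF, if_true]; linear_combination h

lemma cycle_endpt (m : ℕ) (u : Fin (m+3)) (τ : List Bool) :
    (cycleSS m).endpt u τ = u + (((τ.map ιZ).sum : ℤ) : Fin (m+3)) := by
  induction τ generalizing u with
  | nil => simp
  | cons b τ ih =>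
    rw [StepSystem.endpt_cons, ih]
    show (u + ιF m b) + _ = _
    rw [ιF_eq_cast, List.map_cons, List.sum_cons, Int.cast_add, add_assoc]

lemma cycle_endpt_take (m : ℕ) (u : Fin (m+3)) (σ : List Bool) (i : ℕ) :
    (cycleSS m).endpt u (σ.take i) = u + ((psum σ i : ℤ) : Fin (m+3)) :=
  cycle_endpt m u (σ.take i)

lemma cycle_key_eq (m s : ℕ) (hm : s + 1 < m + 3) (u : Fin (m+3)) (σ : List Bool) (i j : ℕ)
    (hjs : j ≤ s) (hji : j ≤ i) :
    ((cycleSS m).endpt u (σ.take i) = (cycleSS m).endpt u (σ.take (i-j))) ↔ dd σ i j = 0 := by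
  have hb := abs_le.mp (abs_dd σ i j hji)
  have hjs' : (j : ℤ) ≤ (s : ℤ) := by exact_mod_cast hjs
  have hm' : (s : ℤ) + 1 < (m : ℤ) + 3 := by exact_mod_cast hm
  rw [cycle_endpt_take, cycle_endpt_take, add_right_inj, ← sub_eq_zero, ← Int.cast_sub,
    show psum σ i - psum σ (i - j) = dd σ i j from rfl,
    fin_cast_eq_zero_of_small _ _ (by rw [abs_lt]; omega)]

lemma cycle_key_adj (m s : ℕ) (hm : s + 1 < m + 3) (u : Fin (m+3)) (σ : List Bool) (i j : ℕ)
    (hjs : j ≤ s) (hji : j ≤ i) :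
    (cycleGraph (m+3)).Adj ((cycleSS m).endpt u (σ.take i)) ((cycleSS m).endpt u (σ.take (i-j)))
      ↔ (dd σ i j = 1 ∨ dd σ i j = -1) := by
  have hb := abs_le.mp (abs_dd σ i j hji)
  have hjs' : (j : ℤ) ≤ (s : ℤ) := by exact_mod_cast hjs
  have hm' : (s : ℤ) + 1 < (m : ℤ) + 3 := by exact_mod_cast hm
  rw [cycleGraph_adj, cycle_endpt_take, cycle_endpt_take]
  have e1 : (u + ((psum σ i : ℤ) : Fin (m+3))) - (u + ((psum σ (i-j) : ℤ) : Fin (m+3)))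
      = ((dd σ i j : ℤ) : Fin (m+3)) := by
    unfold dd; push_cast; ring
  have e2 : (u + ((psum σ (i-j) : ℤ) : Fin (m+3))) - (u + ((psum σ i : ℤ) : Fin (m+3)))
      = ((-dd σ i j : ℤ) : Fin (m+3)) := by
    unfold dd; push_cast; ring
  rw [e1, e2, fin_cast_eq_one_of_small _ _ (by rw [abs_lt]; omega),
    fin_cast_eq_one_of_small _ _ (by rw [abs_lt]; omega)]
  omega

lemma cycle_feature (m s : ℕ) (hm : s + 1 < m + 3) (Feq Fadj : ℕ → ℕ → Bool)
    (u : Fin (m+3)) (σ : List Bool) :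
    windowFeatureEq (cycleGraph (m+3)) ((cycleSS m).walkOfSteps u σ) s Feq Fadj
      ↔ Q s Feq Fadj σ := by
  unfold windowFeatureEq Q
  simp only [StepSystem.length_walkOfSteps, StepSystem.getVert_walkOfSteps]
  constructor <;> rintro ⟨h1, h2⟩ <;>
    refine ⟨fun i j hi hj1 hjs hji => ?_, fun i j hi hj2 hjs hji => ?_⟩
  · rw [← cycle_key_eq m s hm u σ i j hjs hji]; exact h1 i j hi hj1 hjs hji
  · rw [← cycle_key_adj m s hm u σ i j hjs hji]; exact h2 i j hi hj2 hjs hji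
  · rw [cycle_key_eq m s hm u σ i j hjs hji]; exact h1 i j hi hj1 hjs hji
  · rw [cycle_key_adj m s hm u σ i j hjs hji]; exact h2 i j hi hj2 hjs hji

/-! ### The two-cycles step system -/

def sumSS (m : ℕ) : StepSystem (cycleGraph (m+3) ⊕g cycleGraph (m+3)) where
  step x b := Sum.map (fun v => (cycleSS m).step v b) (fun v => (cycleSS m).step v b) x
  adj_step x b := by
    cases x with
    | inl v => exact (cycleSS m).adj_step v b
    | inr v => exact (cycleSS m).adj_step v b
  step_ne x := by
    cases x with
    | inl v => intro h; simp only [Sum.map_inl, Sum.inl.injEq] at h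
               exact (cycleSS m).step_ne v h
    | inr v => intro h; simp only [Sum.map_inr, Sum.inr.injEq] at h
               exact (cycleSS m).step_ne v h
  eq_step {x w} h := by
    cases x with
    | inl v =>
      cases w with
      | inl w =>
        rcases (cycleSS m).eq_step h with h1 | h1
        · left; simp [Sum.map_inl, h1]
        · right; simp [Sum.map_inl, h1]
      | inr w => exact (Bool.false_ne_true h).elim
    | inr v =>
      cases w with
      | inl w => exact (Bool.false_ne_true h).elim
      | inr w =>
        rcases (cycleSS m).eq_step h with h1 | h1
        · left; simp [Sum.map_inr, h1]
        · right; simp [Sum.map_inr, h1]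

lemma sum_endpt_inl (m : ℕ) (u : Fin (m+3)) (τ : List Bool) :
    (sumSS m).endpt (Sum.inl u) τ = Sum.inl ((cycleSS m).endpt u τ) := by
  induction τ generalizing u with
  | nil => rfl
  | cons b τ ih => exact ih ((cycleSS m).step u b)

lemma sum_endpt_inr (m : ℕ) (u : Fin (m+3)) (τ : List Bool) :
    (sumSS m).endpt (Sum.inr u) τ = Sum.inr ((cycleSS m).endpt u τ) := by
  induction τ generalizing u with
  | nil => rfl
  | cons b τ ih => exact ih ((cycleSS m).step u b)

lemma sum_feature (m s : ℕ) (hm : s + 1 < m + 3) (Feq Fadj : ℕ → ℕ → Bool)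
    (x : Fin (m+3) ⊕ Fin (m+3)) (σ : List Bool) :
    windowFeatureEq (cycleGraph (m+3) ⊕g cycleGraph (m+3)) ((sumSS m).walkOfSteps x σ)
      s Feq Fadj ↔ Q s Feq Fadj σ := by
  unfold windowFeatureEq Q
  simp only [StepSystem.length_walkOfSteps, StepSystem.getVert_walkOfSteps]
  cases x with
  | inl u =>
    simp only [sum_endpt_inl, Sum.inl.injEq, SimpleGraph.sum_adj]
    constructor <;> rintro ⟨h1, h2⟩ <;>
      refine ⟨fun i j hi hj1 hjs hji => ?_, fun i j hi hj2 hjs hji => ?_⟩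
    · rw [← cycle_key_eq m s hm u σ i j hjs hji]; exact h1 i j hi hj1 hjs hji
    · rw [← cycle_key_adj m s hm u σ i j hjs hji]; exact h2 i j hi hj2 hjs hji
    · rw [cycle_key_eq m s hm u σ i j hjs hji]; exact h1 i j hi hj1 hjs hji
    · rw [cycle_key_adj m s hm u σ i j hjs hji]; exact h2 i j hi hj2 hjs hji
  | inr u =>
    simp only [sum_endpt_inr, Sum.inr.injEq, SimpleGraph.sum_adj]
    constructor <;> rintro ⟨h1, h2⟩ <;>
      refine ⟨fun i j hi hj1 hjs hji => ?_, fun i j hi hj2 hjs hji => ?_⟩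
    · rw [← cycle_key_eq m s hm u σ i j hjs hji]; exact h1 i j hi hj1 hjs hji
    · rw [← cycle_key_adj m s hm u σ i j hjs hji]; exact h2 i j hi hj2 hjs hji
    · rw [cycle_key_eq m s hm u σ i j hjs hji]; exact h1 i j hi hj1 hjs hji
    · rw [cycle_key_adj m s hm u σ i j hjs hji]; exact h2 i j hi hj2 hjs hji

/-! ### Counting -/

def prodSubtypeEquiv {A : Type*} (p : List Bool → Prop) :
    {x : A × List Bool // p x.2} ≃ A × {b // p b} where
  toFun x := (x.1.1, ⟨x.1.2, x.2⟩)
  invFun y := ⟨(y.1, y.2.1), y.2.2⟩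
  left_inv _ := rfl
  right_inv _ := rfl

lemma card_walks {V : Type*} [DecidableEq V] {G : SimpleGraph V} (S : StepSystem G)
    (s ℓ : ℕ) (Feq Fadj : ℕ → ℕ → Bool)
    (hfeat : ∀ (u : V) (σ : List Bool),
      windowFeatureEq G (S.walkOfSteps u σ) s Feq Fadj ↔ Q s Feq Fadj σ) :
    Nat.card {p : Σ u v : V, G.Walk u v //
        p.2.2.length = ℓ ∧ windowFeatureEq G p.2.2 s Feq Fadj}
      = Nat.card V * Nat.card {σ : List Bool // σ.length = ℓ ∧ Q s Feq Fadj σ} := by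
  have e1 : {x : V × List Bool // x.2.length = ℓ ∧ Q s Feq Fadj x.2}
      ≃ {p : Σ u v : V, G.Walk u v //
          p.2.2.length = ℓ ∧ windowFeatureEq G p.2.2 s Feq Fadj} := by
    refine Equiv.subtypeEquiv S.sigmaEquiv.symm ?_
    rintro ⟨u, σ⟩
    show (σ.length = ℓ ∧ Q s Feq Fadj σ)
      ↔ ((S.walkOfSteps u σ).length = ℓ ∧
          windowFeatureEq G (S.walkOfSteps u σ) s Feq Fadj)
    rw [S.length_walkOfSteps, hfeat u σ]
  calc Nat.card {p : Σ u v : V, G.Walk u v //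
        p.2.2.length = ℓ ∧ windowFeatureEq G p.2.2 s Feq Fadj}
      = Nat.card {x : V × List Bool // x.2.length = ℓ ∧ Q s Feq Fadj x.2} :=
        Nat.card_congr e1.symm
    _ = Nat.card (V × {σ : List Bool // σ.length = ℓ ∧ Q s Feq Fadj σ}) :=
        Nat.card_congr (prodSubtypeEquiv (fun σ : List Bool => σ.length = ℓ ∧ Q s Feq Fadj σ))
    _ = Nat.card V * Nat.card {σ : List Bool // σ.length = ℓ ∧ Q s Feq Fadj σ} :=
        Nat.card_prod _ _

end CrawlAux

/-- Let `n ≥ 6` be even, `s ≥ 2` a window size with `2(s+1) < n`, and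
`ℓ ≥ 1`. Then for every possible window-`s` structural feature (given by indicator
functions `Feq`, `Fadj`), the cycle graph on `n` vertices and the disjoint union of two
cycle graphs on `n/2` vertices contain the same number of walks of length `ℓ` with that
feature. Hence the two graphs are indistinguishable by CRaWl with window size `s`. -/
theorem cycle_vs_two_cycles_feature_count (n s ℓ : ℕ) (hn6 : 6 ≤ n) (hn : Even n)
    (hs : 2 ≤ s) (hsn : 2 * (s + 1) < n) (hℓ : 1 ≤ ℓ) (Feq Fadj : ℕ → ℕ → Bool) :
    Nat.card {p : (u : Fin n) × (v : Fin n) × (SimpleGraph.cycleGraph n).Walk u v //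
        p.2.2.length = ℓ ∧ windowFeatureEq (SimpleGraph.cycleGraph n) p.2.2 s Feq Fadj} =
    Nat.card {p : (u : Fin (n / 2) ⊕ Fin (n / 2)) × (v : Fin (n / 2) ⊕ Fin (n / 2)) ×
          (SimpleGraph.cycleGraph (n / 2) ⊕g SimpleGraph.cycleGraph (n / 2)).Walk u v //
        p.2.2.length = ℓ ∧
        windowFeatureEq (SimpleGraph.cycleGraph (n / 2) ⊕g SimpleGraph.cycleGraph (n / 2))
          p.2.2 s Feq Fadj} := by
  obtain ⟨t, rfl⟩ := hn
  have ht3 : 3 ≤ t := by omega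
  obtain ⟨k, rfl⟩ : ∃ k, t = k + 3 := ⟨t - 3, by omega⟩
  have hdiv : ((k+3) + (k+3)) / 2 = k + 3 := by omega
  rw [hdiv]
  have hbig : (k+3) + (k+3) = (2*k+3) + 3 := by ring
  rw [hbig]
  have h1 : s + 1 < (2*k+3) + 3 := by omega
  have h2 : s + 1 < k + 3 := by omega
  rw [CrawlAux.card_walks (CrawlAux.cycleSS (2*k+3)) s ℓ Feq Fadj
      (CrawlAux.cycle_feature (2*k+3) s h1 Feq Fadj),
    CrawlAux.card_walks (CrawlAux.sumSS k) s ℓ Feq Fadj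
      (CrawlAux.sum_feature k s h2 Feq Fadj)]
  have c1 : Nat.card (Fin ((2*k+3)+3)) = (2*k+3)+3 := by simp
  have c2 : Nat.card (Fin (k+3) ⊕ Fin (k+3)) = (k+3) + (k+3) := by
    rw [Nat.card_sum]; simp
  rw [c1, c2]
  ring_nf
end
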